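/- arXiv:2003.09927 — 8 statements merged into one kernel-verified Lean document; each statement's English description precedes it below -/
import Mathlib

section
/- Let Γ be a finite simplicial connected graph. Then the Bestvina–Brady group H_Γ is generated by the set of elements {vw⁻¹ : (v,w) is a directed edge of Γ}; that is, the kernel of the homomorphism A_Γ → ℤ sending every vertex generator to 1 equals the subgroup of A_Γ generated by the elements vw⁻¹ over all ordered pairs (v,w) of adjacent vertices. -/
/-- The relator set of the right-angled Artin group of a simple graph:
commutators of adjacent vertices. -/
def raagRels {V : Type*} (G : SimpleGraph V) : Set (FreeGroup V) :=
  {r | ∃ v w : V, G.Adj v w ∧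
    r = FreeGroup.of v * FreeGroup.of w * (FreeGroup.of v)⁻¹ * (FreeGroup.of w)⁻¹}

/-- The right-angled Artin group of a simple graph. -/
abbrev RAAG {V : Type*} (G : SimpleGraph V) : Type _ := PresentedGroup (raagRels G)

/-- The homomorphism `A_Γ → ℤ` sending every vertex generator to `1`. -/
def bbHom {V : Type*} (G : SimpleGraph V) : RAAG G →* Multiplicative ℤ :=
  PresentedGroup.toGroup (f := fun _ : V => Multiplicative.ofAdd (1 : ℤ)) (by
    rintro r ⟨v, w, -, rfl⟩
    simp [mul_comm])

namespace BBaux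

variable {V : Type*} {G : SimpleGraph V}

/-- Adjacent generators commute in the RAAG. -/
lemma raag_comm {v w : V} (h : G.Adj v w) :
    Commute (PresentedGroup.of (rels := raagRels G) v) (PresentedGroup.of w) := by
  have hr : (FreeGroup.of v * FreeGroup.of w * (FreeGroup.of v)⁻¹ * (FreeGroup.of w)⁻¹)
      ∈ Subgroup.normalClosure (raagRels G) :=
    Subgroup.subset_normalClosure ⟨v, w, h, rfl⟩
  have h1 : (PresentedGroup.mk (raagRels G))
      (FreeGroup.of v * FreeGroup.of w * (FreeGroup.of v)⁻¹ * (FreeGroup.of w)⁻¹) = 1 :=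
    (QuotientGroup.eq_one_iff _).mpr hr
  simp only [map_mul, map_inv] at h1
  have h2 : (PresentedGroup.of (rels := raagRels G) v) * PresentedGroup.of w *
      (PresentedGroup.of v)⁻¹ * (PresentedGroup.of w)⁻¹ = 1 := h1
  exact commutatorElement_eq_one_iff_commute.mp h2

/-- The edge-generating set. -/
def S (G : SimpleGraph V) : Set (RAAG G) :=
  {x : RAAG G | ∃ v w : V, G.Adj v w ∧
    x = PresentedGroup.of v * (PresentedGroup.of w)⁻¹}

lemma pair_mem {v w : V} (h : G.Reachable v w) :
    PresentedGroup.of (rels := raagRels G) v * (PresentedGroup.of w)⁻¹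
      ∈ Subgroup.closure (S G) := by
  obtain ⟨p⟩ := h
  induction p with
  | nil => simpa using one_mem _
  | @cons a b c hab p ih =>
      have h1 : PresentedGroup.of (rels := raagRels G) a * (PresentedGroup.of b)⁻¹
          ∈ Subgroup.closure (S G) :=
        Subgroup.subset_closure ⟨a, b, hab, rfl⟩
      have : PresentedGroup.of (rels := raagRels G) a * (PresentedGroup.of c)⁻¹
          = (PresentedGroup.of a * (PresentedGroup.of b)⁻¹) *
            (PresentedGroup.of b * (PresentedGroup.of c)⁻¹) := by group
      rw [this]
      exact mul_mem h1 ih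

lemma inv_pair_mem {v w : V} (h : G.Reachable v w) :
    (PresentedGroup.of (rels := raagRels G) v)⁻¹ * PresentedGroup.of w
      ∈ Subgroup.closure (S G) := by
  obtain ⟨p⟩ := h
  induction p with
  | nil => simpa using one_mem _
  | @cons a b c hab p ih =>
      have h1 : (PresentedGroup.of (rels := raagRels G) a)⁻¹ * PresentedGroup.of b
          ∈ Subgroup.closure (S G) := by
        have hc := (raag_comm hab).symm.inv_right
        rw [← hc.eq]
        exact Subgroup.subset_closure ⟨b, a, hab.symm, rfl⟩
      have : (PresentedGroup.of (rels := raagRels G) a)⁻¹ * PresentedGroup.of c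
          = ((PresentedGroup.of a)⁻¹ * PresentedGroup.of b) *
            ((PresentedGroup.of b)⁻¹ * PresentedGroup.of c) := by group
      rw [this]
      exact mul_mem h1 ih

lemma closure_normal (hconn : G.Connected) :
    (Subgroup.closure (S G)).Normal := by
  rw [← Subgroup.normalizer_eq_top_iff, eq_top_iff]
  intro g _
  refine PresentedGroup.generated_by _ _ (fun x => ?_) g
  rw [Subgroup.mem_normalizer_iff]
  -- conjugation in both directions maps the closure into itself
  have conj_mem : ∀ h ∈ Subgroup.closure (S G),
      PresentedGroup.of (rels := raagRels G) x * h * (PresentedGroup.of x)⁻¹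
        ∈ Subgroup.closure (S G) := by
    intro h hh
    induction hh using Subgroup.closure_induction with
    | mem y hy =>
        obtain ⟨v, w, hvw, rfl⟩ := hy
        have hc : PresentedGroup.of (rels := raagRels G) v * (PresentedGroup.of w)⁻¹
            = (PresentedGroup.of w)⁻¹ * PresentedGroup.of v := ((raag_comm hvw).inv_right).eq
        have key : PresentedGroup.of (rels := raagRels G) x *
            (PresentedGroup.of v * (PresentedGroup.of w)⁻¹) * (PresentedGroup.of x)⁻¹
            = (PresentedGroup.of x * (PresentedGroup.of w)⁻¹) *
              (PresentedGroup.of v * (PresentedGroup.of x)⁻¹) := by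
          rw [hc]; group
        rw [key]
        exact mul_mem (pair_mem (hconn.preconnected x w)) (pair_mem (hconn.preconnected v x))
    | one => simpa using one_mem _
    | mul a b _ _ ha hb =>
        have : PresentedGroup.of (rels := raagRels G) x * (a * b) * (PresentedGroup.of x)⁻¹
            = (PresentedGroup.of x * a * (PresentedGroup.of x)⁻¹) *
              (PresentedGroup.of x * b * (PresentedGroup.of x)⁻¹) := by group
        rw [this]; exact mul_mem ha hb
    | inv a _ ha =>
        have : PresentedGroup.of (rels := raagRels G) x * a⁻¹ * (PresentedGroup.of x)⁻¹
            = (PresentedGroup.of x * a * (PresentedGroup.of x)⁻¹)⁻¹ := by group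
        rw [this]; exact inv_mem ha
  have conj_mem' : ∀ h ∈ Subgroup.closure (S G),
      (PresentedGroup.of (rels := raagRels G) x)⁻¹ * h * PresentedGroup.of x
        ∈ Subgroup.closure (S G) := by
    intro h hh
    induction hh using Subgroup.closure_induction with
    | mem y hy =>
        obtain ⟨v, w, hvw, rfl⟩ := hy
        have key : (PresentedGroup.of (rels := raagRels G) x)⁻¹ *
            (PresentedGroup.of v * (PresentedGroup.of w)⁻¹) * PresentedGroup.of x
            = ((PresentedGroup.of x)⁻¹ * PresentedGroup.of v) *
              ((PresentedGroup.of x)⁻¹ * PresentedGroup.of w)⁻¹ := by group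
        rw [key]
        exact mul_mem (inv_pair_mem (hconn.preconnected x v))
          (inv_mem (inv_pair_mem (hconn.preconnected x w)))
    | one => simpa using one_mem _
    | mul a b _ _ ha hb =>
        have : (PresentedGroup.of (rels := raagRels G) x)⁻¹ * (a * b) * PresentedGroup.of x
            = ((PresentedGroup.of x)⁻¹ * a * PresentedGroup.of x) *
              ((PresentedGroup.of x)⁻¹ * b * PresentedGroup.of x) := by group
        rw [this]; exact mul_mem ha hb
    | inv a _ ha =>
        have : (PresentedGroup.of (rels := raagRels G) x)⁻¹ * a⁻¹ * PresentedGroup.of x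
            = ((PresentedGroup.of x)⁻¹ * a * PresentedGroup.of x)⁻¹ := by group
        rw [this]; exact inv_mem ha
  intro h
  constructor
  · exact fun hh => conj_mem h hh
  · intro hh
    have := conj_mem' _ hh
    simpa [mul_assoc] using this

end BBaux

/-- **Dicks–Leary generation.** For a finite connected simplicial graph `Γ`, the
Bestvina–Brady group `H_Γ` (the kernel of `A_Γ → ℤ` sending every vertex generator
to `1`) equals the subgroup of `A_Γ` generated by the elements `v * w⁻¹` over all
ordered pairs `(v, w)` of adjacent vertices. -/
theorem bb_ker_eq_closure_edge_gens {V : Type*} [Fintype V] (G : SimpleGraph V)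
    (hconn : G.Connected) :
    (bbHom G).ker = Subgroup.closure
      {x : RAAG G | ∃ v w : V, G.Adj v w ∧
        x = PresentedGroup.of v * (PresentedGroup.of w)⁻¹} := by
  have hS : {x : RAAG G | ∃ v w : V, G.Adj v w ∧
      x = PresentedGroup.of v * (PresentedGroup.of w)⁻¹} = BBaux.S G := rfl
  rw [hS]
  haveI hN : (Subgroup.closure (BBaux.S G)).Normal := BBaux.closure_normal hconn
  obtain ⟨v0⟩ := hconn.nonempty
  set N := Subgroup.closure (BBaux.S G)
  apply le_antisymm
  · -- kernel ≤ closure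
    intro g hg
    have hg1 : bbHom G g = 1 := hg
    -- the quotient map factors through bbHom
    set φ : RAAG G →* RAAG G ⧸ N := QuotientGroup.mk' N
    set ψ : Multiplicative ℤ →* RAAG G ⧸ N := zpowersHom _ (φ (PresentedGroup.of v0))
    have key : ψ.comp (bbHom G) = φ := by
      apply PresentedGroup.ext
      intro v
      have h1 : bbHom G (PresentedGroup.of v) = Multiplicative.ofAdd (1 : ℤ) := by
        simp [bbHom]
      have h2 : φ (PresentedGroup.of v0) = φ (PresentedGroup.of v) :=
        QuotientGroup.eq.mpr (BBaux.inv_pair_mem (hconn.preconnected v0 v))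
      simp [ψ, h1, zpowersHom_apply, h2]
    have : φ g = 1 := by
      rw [← key]
      simp [MonoidHom.comp_apply, hg1]
    exact (QuotientGroup.eq_one_iff g).mp this
  · -- closure ≤ kernel
    rw [Subgroup.closure_le]
    rintro x ⟨v, w, -, rfl⟩
    have h1 : bbHom G (PresentedGroup.of v) = Multiplicative.ofAdd (1 : ℤ) := by simp [bbHom]
    have h2 : bbHom G (PresentedGroup.of w) = Multiplicative.ofAdd (1 : ℤ) := by simp [bbHom]
    simp [SetLike.mem_coe, MonoidHom.mem_ker, h1, h2]
end

section
/- Let Γ be a finite simplicial connected graph and let T be a spanning tree of Γ. Then the Bestvina–Brady group H_Γ is generated by the elements vw⁻¹ corresponding to the directed edges (v,w) of T. -/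
section Aux

variable {V : Type*} {G T : SimpleGraph V}

open scoped commutatorElement in
lemma raag_comm {v w : V} (h : G.Adj v w) :
    (PresentedGroup.of v : RAAG G) * PresentedGroup.of w
      = PresentedGroup.of w * PresentedGroup.of v := by
  have h1 : (PresentedGroup.mk (raagRels G))
      (FreeGroup.of v * FreeGroup.of w * (FreeGroup.of v)⁻¹ * (FreeGroup.of w)⁻¹) = 1 := by
    have hmem : (FreeGroup.of v * FreeGroup.of w * (FreeGroup.of v)⁻¹ * (FreeGroup.of w)⁻¹)
        ∈ Subgroup.normalClosure (raagRels G) :=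
      Subgroup.subset_normalClosure ⟨v, w, h, rfl⟩
    exact (QuotientGroup.eq_one_iff _).mpr hmem
  simp only [map_mul, map_inv] at h1
  have h2 : ⁅(PresentedGroup.of v : RAAG G), (PresentedGroup.of w : RAAG G)⁆ = (1 : RAAG G) := by
    rw [commutatorElement_def]; exact h1
  exact commutatorElement_eq_one_iff_mul_comm.mp h2

lemma bbHom_of (v : V) : bbHom G (PresentedGroup.of v) = Multiplicative.ofAdd (1 : ℤ) :=
  PresentedGroup.toGroup.of _

variable (hle : T ≤ G) (hT : T.IsTree)

/-- the tree-edge generating set -/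
def treeGens (T : SimpleGraph V) : Set (RAAG G) :=
  {x : RAAG G | ∃ v w : V, T.Adj v w ∧
    x = PresentedGroup.of v * (PresentedGroup.of w)⁻¹}

lemma memA (hT : T.IsTree) (v w : V) :
    (PresentedGroup.of v : RAAG G) * (PresentedGroup.of w)⁻¹
      ∈ Subgroup.closure (treeGens (G := G) T) := by
  obtain ⟨p⟩ := hT.isConnected.preconnected v w
  induction p with
  | nil => rw [mul_inv_cancel]; exact one_mem _
  | @cons a b c hab p ih =>
      have : (PresentedGroup.of a : RAAG G) * (PresentedGroup.of c)⁻¹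
          = (PresentedGroup.of a * (PresentedGroup.of b)⁻¹)
            * (PresentedGroup.of b * (PresentedGroup.of c)⁻¹) := by group
      rw [this]
      exact mul_mem (Subgroup.subset_closure ⟨a, b, hab, rfl⟩) ih

lemma memB (hconn : G.Connected) (hle : T ≤ G) (hT : T.IsTree) (v w : V) :
    ((PresentedGroup.of v : RAAG G))⁻¹ * PresentedGroup.of w
      ∈ Subgroup.closure (treeGens (G := G) T) := by
  obtain ⟨p⟩ := hconn.preconnected v w
  induction p with
  | nil => rw [inv_mul_cancel]; exact one_mem _
  | @cons a b c hab p ih =>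
      have : ((PresentedGroup.of a : RAAG G))⁻¹ * PresentedGroup.of c
          = ((PresentedGroup.of a)⁻¹ * PresentedGroup.of b)
            * ((PresentedGroup.of b)⁻¹ * PresentedGroup.of c) := by group
      rw [this]
      refine mul_mem ?_ ih
      have hc : Commute (PresentedGroup.of a : RAAG G) (PresentedGroup.of b) := raag_comm hab
      rw [hc.inv_left.eq]
      exact memA hT b a

lemma treeClosure_normal (hconn : G.Connected) (hle : T ≤ G) (hT : T.IsTree) :
    (Subgroup.closure (treeGens (G := G) T)).Normal := by
  set H := Subgroup.closure (treeGens (G := G) T) with hH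
  have key : ∀ v : V, ∀ g ∈ treeGens (G := G) T,
      (PresentedGroup.of v : RAAG G) * g * (PresentedGroup.of v)⁻¹ ∈ H ∧
      ((PresentedGroup.of v : RAAG G))⁻¹ * g * PresentedGroup.of v ∈ H := by
    rintro v g ⟨a, b, hab, rfl⟩
    have hGab : G.Adj a b := hle hab
    have hc : Commute (PresentedGroup.of a : RAAG G) (PresentedGroup.of b) := raag_comm hGab
    have hcomm : (PresentedGroup.of a : RAAG G) * (PresentedGroup.of b)⁻¹
        = (PresentedGroup.of b)⁻¹ * PresentedGroup.of a := hc.inv_right.eq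
    constructor
    · have : (PresentedGroup.of v : RAAG G)
          * (PresentedGroup.of a * (PresentedGroup.of b)⁻¹) * (PresentedGroup.of v)⁻¹
          = (PresentedGroup.of v * (PresentedGroup.of b)⁻¹)
            * (PresentedGroup.of a * (PresentedGroup.of v)⁻¹) := by
        rw [hcomm]; group
      rw [this]
      exact mul_mem (memA hT v b) (memA hT a v)
    · have : ((PresentedGroup.of v : RAAG G))⁻¹
          * (PresentedGroup.of a * (PresentedGroup.of b)⁻¹) * PresentedGroup.of v
          = ((PresentedGroup.of v)⁻¹ * PresentedGroup.of a)
            * ((PresentedGroup.of b)⁻¹ * PresentedGroup.of v) := by group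
      rw [this]
      refine mul_mem (memB hconn hle hT v a) ?_
      have := memB hconn hle hT v b
      simpa using inv_mem this
  -- each generator of the group lies in the normalizer of H
  have hnorm : ∀ v : V, (PresentedGroup.of v : RAAG G) ∈ Subgroup.normalizer (H : Set (RAAG G)) := by
    intro v
    rw [Subgroup.mem_normalizer_iff]
    intro g
    constructor
    · intro hg
      revert g
      have : ∀ g ∈ H, (PresentedGroup.of v : RAAG G) * g * (PresentedGroup.of v)⁻¹ ∈ H := by
        intro g hg
        refine Subgroup.closure_induction ?_ ?_ ?_ ?_ hg
        · intro x hx; exact (key v x hx).1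
        · simpa using one_mem H
        · intro x y hx hy hx' hy'
          have : (PresentedGroup.of v : RAAG G) * (x * y) * (PresentedGroup.of v)⁻¹
              = ((PresentedGroup.of v) * x * (PresentedGroup.of v)⁻¹)
                * ((PresentedGroup.of v) * y * (PresentedGroup.of v)⁻¹) := by group
          rw [this]; exact mul_mem hx' hy'
        · intro x hx hx'
          have : (PresentedGroup.of v : RAAG G) * x⁻¹ * (PresentedGroup.of v)⁻¹
              = ((PresentedGroup.of v) * x * (PresentedGroup.of v)⁻¹)⁻¹ := by group
          rw [this]; exact inv_mem hx'
      exact fun g hg => this g hg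
    · intro hg
      have : ∀ g ∈ H, ((PresentedGroup.of v : RAAG G))⁻¹ * g * (PresentedGroup.of v) ∈ H := by
        intro g hg
        refine Subgroup.closure_induction ?_ ?_ ?_ ?_ hg
        · intro x hx; exact (key v x hx).2
        · simpa using one_mem H
        · intro x y hx hy hx' hy'
          have : ((PresentedGroup.of v : RAAG G))⁻¹ * (x * y) * (PresentedGroup.of v)
              = ((PresentedGroup.of v)⁻¹ * x * (PresentedGroup.of v))
                * ((PresentedGroup.of v)⁻¹ * y * (PresentedGroup.of v)) := by group
          rw [this]; exact mul_mem hx' hy'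
        · intro x hx hx'
          have : ((PresentedGroup.of v : RAAG G))⁻¹ * x⁻¹ * (PresentedGroup.of v)
              = ((PresentedGroup.of v)⁻¹ * x * (PresentedGroup.of v))⁻¹ := by group
          rw [this]; exact inv_mem hx'
      have := this _ hg
      simpa [mul_assoc] using this
  have htop : (⊤ : Subgroup (RAAG G)) ≤ Subgroup.normalizer (H : Set (RAAG G)) := by
    rw [← PresentedGroup.closure_range_of (raagRels G)]
    rw [Subgroup.closure_le]
    rintro x ⟨v, rfl⟩
    exact hnorm v
  exact Subgroup.normalizer_eq_top_iff.mp (top_le_iff.mp htop)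

end Aux


/-- For a finite connected simplicial graph `Γ` with a spanning tree `T`, the
Bestvina–Brady group `H_Γ` is generated by the elements `v * w⁻¹` corresponding to
the directed edges `(v, w)` of `T`. -/
theorem bb_ker_eq_closure_spanning_tree_edge_gens {V : Type*} [Fintype V]
    (G T : SimpleGraph V) (hconn : G.Connected) (hle : T ≤ G) (hT : T.IsTree) :
    (bbHom G).ker = Subgroup.closure
      {x : RAAG G | ∃ v w : V, T.Adj v w ∧
        x = PresentedGroup.of v * (PresentedGroup.of w)⁻¹} := by
  have hVne : Nonempty V := hconn.nonempty
  obtain ⟨v₀⟩ := hVne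
  set H := Subgroup.closure (treeGens (G := G) T) with hHdef
  have hEq : ({x : RAAG G | ∃ v w : V, T.Adj v w ∧
      x = PresentedGroup.of v * (PresentedGroup.of w)⁻¹}) = treeGens (G := G) T := rfl
  rw [hEq, ← hHdef]
  have hNormal : H.Normal := treeClosure_normal hconn hle hT
  have hHker : H ≤ (bbHom G).ker := by
    rw [hHdef, Subgroup.closure_le]
    rintro x ⟨v, w, hvw, rfl⟩
    simp [MonoidHom.mem_ker, bbHom_of]
  apply le_antisymm ?_ hHker
  -- every element can be written as h * t^n with h ∈ H
  set t : RAAG G := PresentedGroup.of v₀ with ht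
  have main : ∀ g : RAAG G, ∃ n : ℤ, g * t ^ (-n) ∈ H := by
    have : ∀ g ∈ (⊤ : Subgroup (RAAG G)), ∃ n : ℤ, g * t ^ (-n) ∈ H := by
      intro g hg
      rw [← PresentedGroup.closure_range_of (raagRels G)] at hg
      refine Subgroup.closure_induction ?_ ?_ ?_ ?_ hg
      · rintro x ⟨v, rfl⟩
        exact ⟨1, by simpa using memA (G := G) hT v v₀⟩
      · exact ⟨0, by simpa using one_mem H⟩
      · rintro x y hx hy ⟨nx, hnx⟩ ⟨ny, hny⟩
        refine ⟨nx + ny, ?_⟩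
        have hconj : t ^ nx * (y * t ^ (-ny)) * (t ^ nx)⁻¹ ∈ H :=
          hNormal.conj_mem _ hny _
        have hrw : x * y * t ^ (-(nx + ny))
            = (x * t ^ (-nx)) * (t ^ nx * (y * t ^ (-ny)) * (t ^ nx)⁻¹) := by
          group
        rw [hrw]
        exact mul_mem hnx hconj
      · rintro x hx ⟨n, hn⟩
        refine ⟨-n, ?_⟩
        have hconj : (t ^ n)⁻¹ * (x * t ^ (-n))⁻¹ * ((t ^ n)⁻¹)⁻¹ ∈ H :=
          hNormal.conj_mem _ (inv_mem hn) _
        have hrw : x⁻¹ * t ^ (-(-n))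
            = (t ^ n)⁻¹ * (x * t ^ (-n))⁻¹ * ((t ^ n)⁻¹)⁻¹ := by
          group
        rw [hrw]
        exact hconj
    exact fun g => this g trivial
  intro g hg
  obtain ⟨n, hn⟩ := main g
  have hbb : bbHom G (g * t ^ (-n)) = 1 := hHker hn
  have hbbg : bbHom G g = 1 := hg
  have hbt : bbHom G t = Multiplicative.ofAdd (1 : ℤ) := bbHom_of v₀
  have hn0 : n = 0 := by
    rw [map_mul, hbbg, one_mul, map_zpow, hbt] at hbb
    have := congrArg Multiplicative.toAdd hbb
    simpa using this
  rw [hn0] at hn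
  simpa using hn
end

section
/- Let Γ be a finite simplicial connected graph. If the Bestvina–Brady group H_Γ is a free abelian group (i.e., isomorphic to ℤ^n for some n ≥ 0), then Γ is a complete graph. -/
/-- Adjacent generators commute in the RAAG. -/
lemma raag_comm_s4 {V : Type*} {G : SimpleGraph V} {p q : V} (hpq : G.Adj p q) :
    Commute (PresentedGroup.of p : RAAG G) (PresentedGroup.of q) := by
  have h1 : ((QuotientGroup.mk (FreeGroup.of p * FreeGroup.of q * (FreeGroup.of p)⁻¹ *
      (FreeGroup.of q)⁻¹) : PresentedGroup (raagRels G))) = 1 :=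
    (QuotientGroup.eq_one_iff _).mpr (Subgroup.subset_normalClosure ⟨p, q, hpq, rfl⟩)
  simp only [QuotientGroup.mk_mul, QuotientGroup.mk_inv] at h1
  have h2 : (PresentedGroup.of p : RAAG G) * PresentedGroup.of q * (PresentedGroup.of p)⁻¹ *
      (PresentedGroup.of q)⁻¹ = 1 := h1
  exact commutatorElement_eq_one_iff_commute.mp h2

/-- If `Γ` is a finite connected simplicial graph and the Bestvina–Brady group `H_Γ`
is a free abelian group (isomorphic to `ℤ^n` for some `n ≥ 0`), then `Γ` is a
complete graph. -/
theorem complete_of_bb_free_abelian {V : Type*} [Fintype V] (G : SimpleGraph V)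
    (hconn : G.Connected)
    (h : ∃ n : ℕ, Nonempty ((bbHom G).ker ≃* Multiplicative (Fin n → ℤ))) :
    G = ⊤ := by
  classical
  obtain ⟨n, ⟨e⟩⟩ := h
  have hab : ∀ x y : (bbHom G).ker, x * y = y * x := fun x y =>
    e.injective (by rw [map_mul, map_mul, mul_comm])
  -- key local lemma
  have key : ∀ a b u : V, G.Adj u a → G.Adj u b → a = b ∨ G.Adj a b := by
    intro a b u hua hub
    by_contra hcon
    push_neg at hcon
    obtain ⟨hne, hnadj⟩ := hcon
    -- map to permutations
    set f : V → Equiv.Perm (Fin 3) :=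
      fun x => if x = a then Equiv.swap 0 1 else if x = b then Equiv.swap 1 2 else 1 with hf
    have hone : ∀ p q : V, G.Adj p q → f p = 1 ∨ f q = 1 := by
      intro p q hpq
      by_cases hpa : p = a
      · right
        have hqa : q ≠ a := by rintro rfl; exact G.irrefl (hpa ▸ hpq)
        have hqb : q ≠ b := by rintro rfl; exact hnadj (hpa ▸ hpq)
        simp [hf, hqa, hqb]
      · by_cases hpb : p = b
        · right
          have hqb : q ≠ b := by rintro rfl; exact G.irrefl (hpb ▸ hpq)
          have hqa : q ≠ a := by rintro rfl; exact hnadj ((hpb ▸ hpq).symm)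
          simp [hf, hqa, hqb]
        · left; simp [hf, hpa, hpb]
    have cond : ∀ r ∈ raagRels G, FreeGroup.lift f r = 1 := by
      rintro r ⟨p, q, hpq, rfl⟩
      simp only [map_mul, map_inv, FreeGroup.lift_apply_of]
      rcases hone p q hpq with h1 | h1 <;> simp [h1]
    set φ : RAAG G →* Equiv.Perm (Fin 3) := PresentedGroup.toGroup cond with hφ
    -- kernel elements
    have hmem : ∀ v : V, bbHom G (PresentedGroup.of v * (PresentedGroup.of u)⁻¹) = 1 := by
      intro v
      rw [map_mul, map_inv, bbHom, PresentedGroup.toGroup.of, PresentedGroup.toGroup.of,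
        mul_inv_cancel]
    set A : RAAG G := PresentedGroup.of a with hA
    set B : RAAG G := PresentedGroup.of b with hB
    set U : RAAG G := PresentedGroup.of u with hU
    have hxA : A * U⁻¹ ∈ (bbHom G).ker := by rw [MonoidHom.mem_ker]; exact hmem a
    have hxB : B * U⁻¹ ∈ (bbHom G).ker := by rw [MonoidHom.mem_ker]; exact hmem b
    have hxy : A * U⁻¹ * (B * U⁻¹) = B * U⁻¹ * (A * U⁻¹) :=
      congrArg Subtype.val (hab ⟨A * U⁻¹, hxA⟩ ⟨B * U⁻¹, hxB⟩)
    have cUA : Commute U⁻¹ A := (raag_comm_s4 hua).inv_left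
    have cUB : Commute U⁻¹ B := (raag_comm_s4 hub).inv_left
    have eB : U⁻¹ * (B * U⁻¹) = B * (U⁻¹ * U⁻¹) := by rw [← mul_assoc, cUB.eq, mul_assoc]
    have eA : U⁻¹ * (A * U⁻¹) = A * (U⁻¹ * U⁻¹) := by rw [← mul_assoc, cUA.eq, mul_assoc]
    have hAB : A * B = B * A := by
      have h1 : A * B * (U⁻¹ * U⁻¹) = B * A * (U⁻¹ * U⁻¹) := by
        calc A * B * (U⁻¹ * U⁻¹) = A * U⁻¹ * (B * U⁻¹) := by
              rw [mul_assoc, ← eB, ← mul_assoc]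
          _ = B * U⁻¹ * (A * U⁻¹) := hxy
          _ = B * A * (U⁻¹ * U⁻¹) := by
              rw [mul_assoc, eA, ← mul_assoc]
      exact mul_right_cancel h1
    have hφAB := congrArg φ hAB
    rw [map_mul, map_mul] at hφAB
    have hφA : φ A = Equiv.swap 0 1 := by
      simp [hφ, A, PresentedGroup.toGroup.of, hf]
    have hφB : φ B = Equiv.swap 1 2 := by
      simp [hφ, B, PresentedGroup.toGroup.of, hf, hne.symm]
    rw [hφA, hφB] at hφAB
    exact absurd hφAB (by decide)
  -- connectivity argument
  have reach : ∀ v w : V, G.Reachable v w → v = w ∨ G.Adj v w := by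
    intro v w ⟨p⟩
    induction p with
    | nil => exact Or.inl rfl
    | cons hadj q ih =>
      rcases ih with rfl | hadj2
      · exact Or.inr hadj
      · exact key _ _ _ hadj.symm hadj2
  ext v w
  simp only [SimpleGraph.top_adj]
  constructor
  · exact fun hvw => hvw.ne
  · intro hvw
    rcases reach v w (hconn.preconnected v w) with rfl | h2
    · exact absurd rfl hvw
    · exact h2
end

section
/- Let G be a group acting on a tree T by graph automorphisms. If g₁, g₂ ∈ G are commuting elements each of which fixes some vertex of T, then Fix(g₁) ∩ Fix(g₂) ≠ ∅ (g₁ and g₂ have a common fixed vertex), and the product g₁g₂ fixes a vertex of T. -/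
section Aux

open SimpleGraph

variable {G X : Type*} [Group G] [MulAction G X]

/-- The graph homomorphism induced by the action of `g`. -/
private def smulHom (T : SimpleGraph X)
    (hact : ∀ (g : G) (v w : X), T.Adj v w → T.Adj (g • v) (g • w)) (g : G) : T →g T :=
  ⟨(g • ·), fun h => hact g _ _ h⟩

private lemma list_map_eq_self {α : Type*} {f : α → α} :
    ∀ {l : List α}, l.map f = l → ∀ a ∈ l, f a = a := by
  intro l
  induction l with
  | nil => intro _ a ha; simp at ha
  | cons b l ih =>
    intro h a ha
    rw [List.map_cons, List.cons.injEq] at h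
    rcases List.mem_cons.mp ha with rfl | ha
    · exact h.1
    · exact ih h.2 a ha

/-- Every vertex on a path between two fixed vertices is fixed. -/
private lemma fix_path {T : SimpleGraph X} (hT : T.IsTree)
    (hact : ∀ (g : G) (v w : X), T.Adj v w → T.Adj (g • v) (g • w))
    (g : G) {u v : X} (hu : g • u = u) (hv : g • v = v)
    (w : T.Walk u v) (hw : w.IsPath) : ∀ y ∈ w.support, g • y = y := by
  have hinj : Function.Injective (smulHom T hact g) := MulAction.injective g
  set w' : T.Walk u v := ((w.map (smulHom T hact g)).copy hu hv) with hw'def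
  have hw' : w'.IsPath := by
    erw [hw'def, Walk.isPath_copy]
    exact w.map_isPath_of_injective hinj hw
  have heq : w' = w := (hT.existsUnique_path u v).unique hw' hw
  have hsup : w.support.map (g • ·) = w.support := by
    have := congrArg Walk.support heq
    erw [hw'def, Walk.support_copy, Walk.support_map] at this
    exact this
  exact list_map_eq_self hsup

/-- The action preserves graph distance. -/
private lemma smul_dist {T : SimpleGraph X} (hT : T.IsTree)
    (hact : ∀ (g : G) (v w : X), T.Adj v w → T.Adj (g • v) (g • w))
    (g : G) (u v : X) : T.dist (g • u) (g • v) = T.dist u v := by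
  have key : ∀ (g : G) (u v : X), T.dist (g • u) (g • v) ≤ T.dist u v := by
    intro g u v
    obtain ⟨p, _, hl⟩ := hT.isConnected.exists_path_of_dist u v
    calc T.dist (g • u) (g • v) ≤ (p.map (smulHom T hact g)).length := T.dist_le _
      _ = T.dist u v := by rw [Walk.length_map, hl]
  refine le_antisymm (key g u v) ?_
  have := key g⁻¹ (g • u) (g • v)
  simpa using this

private lemma getVert_one_append {T : SimpleGraph X} {x v w : X} (hxv : x ≠ v)
    (p : T.Walk x v) (r : T.Walk v w) : (p.append r).getVert 1 = p.getVert 1 := by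
  cases p with
  | nil => exact absurd rfl hxv
  | cons h q =>
    rw [Walk.cons_append, Walk.getVert_cons_succ, Walk.getVert_cons_succ,
      Walk.getVert_zero, Walk.getVert_zero]

/-- In a tree, the nearest point of a path-closed set is unique. -/
private lemma unique_nearest {T : SimpleGraph X} (hT : T.IsTree) (S : Set X)
    (hS : ∀ u v, u ∈ S → v ∈ S → ∀ (w : T.Walk u v), w.IsPath → ∀ y ∈ w.support, y ∈ S) :
    ∀ (d : ℕ) (x p q : X), p ∈ S → q ∈ S → T.dist x p = d → T.dist x q = d →
      (∀ r ∈ S, d ≤ T.dist x r) → p = q := by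
  intro d
  induction d with
  | zero =>
    intro x p q _ _ hdp hdq _
    have hp : x = p := (hT.isConnected.dist_eq_zero_iff).mp hdp
    have hq : x = q := (hT.isConnected.dist_eq_zero_iff).mp hdq
    rw [← hp, ← hq]
  | succ d ih =>
    intro x p q hp hq hdp hdq hmin
    obtain ⟨P, hPp, hPl⟩ := hT.isConnected.exists_path_of_dist x p
    obtain ⟨Q, hQp, hQl⟩ := hT.isConnected.exists_path_of_dist x q
    rw [hdp] at hPl
    rw [hdq] at hQl
    -- x is not p and not q
    have hxp : x ≠ p := by
      intro h; rw [← h, T.dist_self] at hdp; omega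
    have hxq : x ≠ q := by
      intro h; rw [← h, T.dist_self] at hdq; omega
    -- distance from x to its neighbours along P, Q
    have hdist_neighbor : ∀ (y : X), T.Adj x y → d ≤ T.dist y p ∧ ∀ r ∈ S, d ≤ T.dist y r := by
      intro y hadj
      have hxy : T.dist x y ≤ 1 := by
        have := T.dist_le (Walk.cons hadj Walk.nil)
        simpa using this
      constructor
      · have := hT.isConnected.dist_triangle (u := x) (v := y) (w := p)
        omega
      · intro r hr
        have htri := hT.isConnected.dist_triangle (u := x) (v := y) (w := r)
        have := hmin r hr
        omega
    by_cases hsame : P.getVert 1 = Q.getVert 1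
    · -- paths agree on the second vertex: recurse
      cases P with
      | nil => simp at hPl
      | cons hadj P' =>
        cases Q with
        | nil => simp at hQl
        | cons hadj' Q' =>
          rename_i x₁ y₁
          -- x₁ = y₁
          have hxy1 : x₁ = y₁ := by
            simpa [Walk.getVert_cons_succ, Walk.getVert_zero] using hsame
          subst hxy1
          have hP'l : P'.length = d := by simpa using hPl
          have hQ'l : Q'.length = d := by simpa using hQl
          have hmin' : ∀ r ∈ S, d ≤ T.dist x₁ r := (hdist_neighbor x₁ hadj).2
          have hd1 : T.dist x₁ p = d :=
            le_antisymm (by simpa [hP'l] using T.dist_le P') (hmin' p hp)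
          have hd2 : T.dist x₁ q = d :=
            le_antisymm (by simpa [hQ'l] using T.dist_le Q') (hmin' q hq)
          exact ih x₁ p q hp hq hd1 hd2 hmin'
    · -- paths diverge immediately: then x lies on the path from p to q, contradiction
      exfalso
      -- any common vertex of P and Q is x
      have hcommon : ∀ y, y ∈ P.support → y ∈ Q.support → y = x := by
        intro y hyP hyQ
        by_contra hyx
        obtain ⟨qP, rP, hPd⟩ := Walk.mem_support_iff_exists_append.mp hyP
        obtain ⟨qQ, rQ, hQd⟩ := Walk.mem_support_iff_exists_append.mp hyQ
        have hqP : qP.IsPath := by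
          rw [hPd] at hPp; exact hPp.of_append_left
        have hqQ : qQ.IsPath := by
          rw [hQd] at hQp; exact hQp.of_append_left
        have hqeq : qP = qQ := (hT.existsUnique_path x y).unique hqP hqQ
        apply hsame
        have h1 : P.getVert 1 = qP.getVert 1 := by
          rw [hPd]; exact getVert_one_append (Ne.symm hyx) qP rP
        have h2 : Q.getVert 1 = qQ.getVert 1 := by
          rw [hQd]; exact getVert_one_append (Ne.symm hyx) qQ rQ
        rw [h1, h2, hqeq]
      -- the concatenation is a path from p to q
      set W : T.Walk p q := P.reverse.append Q with hWdef
      have hxnotQtail : x ∉ Q.support.tail := by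
        intro hmem
        have hnodup : Q.support.Nodup := hQp.support_nodup
        cases Q with
        | nil => simp at hmem
        | cons h Q' =>
          rw [Walk.support_cons] at hnodup hmem
          simp only [List.tail_cons] at hmem
          exact (List.nodup_cons.mp hnodup).1 hmem
      have hWpath : W.IsPath := by
        rw [Walk.isPath_def, hWdef, Walk.support_append]
        apply List.Nodup.append
        · rw [Walk.support_reverse]
          exact List.nodup_reverse.mpr hPp.support_nodup
        · exact hQp.support_nodup.sublist (List.tail_sublist _)
        · intro y hy1 hy2
          rw [Walk.support_reverse, List.mem_reverse] at hy1
          have := hcommon y hy1 (List.mem_of_mem_tail hy2)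
          subst this
          exact hxnotQtail hy2
      have hxW : x ∈ W.support := by
        rw [hWdef]
        rw [Walk.mem_support_append_iff]
        left
        rw [Walk.support_reverse, List.mem_reverse]
        exact P.start_mem_support
      have hxS : x ∈ S := hS p q hp hq W hWpath x hxW
      have := hmin x hxS
      rw [T.dist_self] at this
      omega

end Aux

/-- Let a group `G` act on a tree `T` by graph automorphisms. If `g₁, g₂ ∈ G` commute
and each fixes some vertex of `T`, then they have a common fixed vertex, and the
product `g₁ * g₂` fixes a vertex of `T`. -/
theorem commuting_elliptic_common_fixed_point {G X : Type*} [Group G] [MulAction G X]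
    (T : SimpleGraph X) (hT : T.IsTree)
    (hact : ∀ (g : G) (v w : X), T.Adj v w → T.Adj (g • v) (g • w))
    (g₁ g₂ : G) (hcomm : Commute g₁ g₂)
    (h₁ : ∃ x : X, g₁ • x = x) (h₂ : ∃ x : X, g₂ • x = x) :
    (∃ x : X, g₁ • x = x ∧ g₂ • x = x) ∧ (∃ x : X, (g₁ * g₂) • x = x) := by
  obtain ⟨x, hx⟩ := h₂
  obtain ⟨x₀, hx₀⟩ := h₁
  set S : Set X := {y | g₁ • y = y} with hSdef
  have hSclosed : ∀ u v, u ∈ S → v ∈ S → ∀ (w : T.Walk u v), w.IsPath →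
      ∀ y ∈ w.support, y ∈ S := fun u v hu hv w hw y hy =>
    fix_path hT hact g₁ hu hv w hw y hy
  -- find a nearest point of S to x
  set D : Set ℕ := {n | ∃ r ∈ S, T.dist x r = n} with hDdef
  have hDne : D.Nonempty := ⟨T.dist x x₀, x₀, hx₀, rfl⟩
  obtain ⟨p, hpS, hpd⟩ : ∃ r ∈ S, T.dist x r = sInf D := Nat.sInf_mem hDne
  have hmin : ∀ r ∈ S, sInf D ≤ T.dist x r := fun r hr =>
    Nat.sInf_le ⟨r, hr, rfl⟩
  -- g₂ • p is also a nearest point of S to x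
  have hqS : g₂ • p ∈ S := by
    show g₁ • g₂ • p = g₂ • p
    rw [smul_smul, hcomm.eq, mul_smul, hpS]
  have hqd : T.dist x (g₂ • p) = sInf D := by
    calc T.dist x (g₂ • p) = T.dist (g₂ • x) (g₂ • p) := by rw [hx]
      _ = T.dist x p := smul_dist hT hact g₂ x p
      _ = sInf D := hpd
  have hpq : p = g₂ • p :=
    unique_nearest hT S hSclosed (sInf D) x p (g₂ • p) hpS hqS hpd hqd hmin
  refine ⟨⟨p, hpS, hpq.symm⟩, ⟨p, ?_⟩⟩
  rw [mul_smul, ← hpq, hpS]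
end

section
/- Let Γ be a finite simplicial graph and suppose the Bestvina–Brady group H_Γ acts on a tree T by graph automorphisms in such a way that the element vw⁻¹ fixes a vertex of T for every directed edge (v,w) of Γ. Then for any clique K of Γ, the subgroup H_K of H_Γ generated by the elements vw⁻¹ over all directed edges (v,w) with both endpoints in K fixes a vertex of T. -/
section TreeLemmas

open SimpleGraph Walk

variable {X : Type*} {T : SimpleGraph X} [DecidableEq X]

/-- The geodesic path between two vertices of a tree. -/
noncomputable def tPath (hT : T.IsTree) (x y : X) : T.Walk x y :=
  (hT.isConnected.exists_path_of_dist x y).choose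

lemma tPath_isPath (hT : T.IsTree) (x y : X) : (tPath hT x y).IsPath :=
  (hT.isConnected.exists_path_of_dist x y).choose_spec.1

lemma tPath_length (hT : T.IsTree) (x y : X) : (tPath hT x y).length = T.dist x y :=
  (hT.isConnected.exists_path_of_dist x y).choose_spec.2

lemma eq_tPath (hT : T.IsTree) {x y : X} (p : T.Walk x y) (hp : p.IsPath) :
    p = tPath hT x y :=
  (hT.existsUnique_path x y).unique hp (tPath_isPath hT x y)

lemma length_eq_dist (hT : T.IsTree) {x y : X} (p : T.Walk x y) (hp : p.IsPath) :
    p.length = T.dist x y := by rw [eq_tPath hT p hp, tPath_length]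

lemma isPath_concat' {u v w : X} {p : T.Walk u v} (hp : p.IsPath) (h : T.Adj v w)
    (hw : w ∉ p.support) : (p.concat h).IsPath := by
  rw [← Walk.isPath_reverse_iff, Walk.reverse_concat]
  exact Walk.IsPath.cons hp.reverse (by simpa using hw)

lemma mem_case (hT : T.IsTree) {y a b : X} (hab : T.Adj a b)
    (ha : a ∈ (tPath hT y b).support) :
    T.dist y b = T.dist y a + 1 ∧ tPath hT y b = (tPath hT y a).concat hab := by
  have hQp : (tPath hT y b).IsPath := tPath_isPath hT y b
  have htake : ((tPath hT y b).takeUntil a ha).IsPath := hQp.takeUntil ha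
  have hdrop : ((tPath hT y b).dropUntil a ha).IsPath := hQp.dropUntil ha
  have hdl : ((tPath hT y b).dropUntil a ha).length = 1 := by
    rw [length_eq_dist hT _ hdrop, SimpleGraph.dist_eq_one_iff_adj]
    exact hab
  have htl : ((tPath hT y b).takeUntil a ha).length = T.dist y a := length_eq_dist hT _ htake
  have hspec := (tPath hT y b).take_spec ha
  constructor
  · have hlen := congrArg Walk.length hspec
    rw [Walk.length_append] at hlen
    have hQl : (tPath hT y b).length = T.dist y b := tPath_length hT y b
    omega
  · have hdrop_eq : (tPath hT y b).dropUntil a ha = Walk.cons hab Walk.nil :=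
      (hT.existsUnique_path a b).unique hdrop (by simp [hab, hab.ne])
    rw [← hspec, hdrop_eq, ← Walk.concat_eq_append, eq_tPath hT _ htake]

lemma not_mem_case (hT : T.IsTree) {y a b : X} (hab : T.Adj a b)
    (ha : a ∉ (tPath hT y b).support) :
    T.dist y a = T.dist y b + 1 ∧ tPath hT y a = (tPath hT y b).concat hab.symm := by
  have hp : ((tPath hT y b).concat hab.symm).IsPath :=
    isPath_concat' (tPath_isPath hT y b) hab.symm ha
  have heq := eq_tPath hT _ hp
  refine ⟨?_, heq.symm⟩
  rw [← tPath_length hT y a, ← heq, Walk.length_concat, tPath_length]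

lemma adj_dist_cases (hT : T.IsTree) (y : X) {a b : X} (hab : T.Adj a b) :
    T.dist y b = T.dist y a + 1 ∨ T.dist y a = T.dist y b + 1 := by
  by_cases ha : a ∈ (tPath hT y b).support
  · exact Or.inl (mem_case hT hab ha).1
  · exact Or.inr (not_mem_case hT hab ha).1

lemma lower_concat (hT : T.IsTree) {y a b : X} (hab : T.Adj a b)
    (h : T.dist y a = T.dist y b + 1) :
    tPath hT y a = (tPath hT y b).concat hab.symm := by
  by_cases hb : b ∈ (tPath hT y a).support
  · exact (mem_case hT hab.symm hb).2
  · have := (not_mem_case hT hab.symm hb).1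
    omega

lemma lower_unique (hT : T.IsTree) {y a b c : X} (hab : T.Adj a b) (hac : T.Adj a c)
    (hb : T.dist y a = T.dist y b + 1) (hc : T.dist y a = T.dist y c + 1) : b = c := by
  have h1 := lower_concat hT hab hb
  have h2 := lower_concat hT hac hc
  obtain ⟨hv, -⟩ := Walk.concat_inj (h1.symm.trans h2)
  exact hv

lemma dist_add_length (hT : T.IsTree) (y : X) :
    ∀ {a q : X} (R : T.Walk a q), R.IsPath →
      ∀ {b : X}, T.Adj a b → T.dist y a = T.dist y b + 1 → b ∉ R.support →
      T.dist y q = T.dist y a + R.length := by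
  intro a q R
  induction R with
  | nil => simp
  | @cons u c w h R' ih =>
    intro hR b hab hlow hbm
    rw [Walk.cons_isPath_iff] at hR
    rw [Walk.support_cons, List.mem_cons] at hbm
    push_neg at hbm
    rcases adj_dist_cases hT y h with h1 | h1
    · have := ih hR.1 h.symm h1 hR.2
      rw [Walk.length_cons]
      omega
    · have : c = b := lower_unique hT h hab h1 hlow
      exact absurd this.symm (by
        intro hh
        exact hbm.2 (hh ▸ R'.start_mem_support))

lemma proj_unique (hT : T.IsTree) {F : Set X} {y p q : X}
    (hp : p ∈ F) (hq : q ∈ F)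
    (hconv : ∀ m ∈ (tPath hT p q).support, m ∈ F)
    (hmin : ∀ m ∈ F, T.dist y p ≤ T.dist y m)
    (hd : T.dist y q = T.dist y p) : p = q := by
  obtain ⟨R, hR, hRs⟩ : ∃ R : T.Walk p q, R.IsPath ∧ ∀ m ∈ R.support, m ∈ F :=
    ⟨tPath hT p q, tPath_isPath hT p q, hconv⟩
  cases R with
  | nil => rfl
  | @cons _ c _ h R' =>
    exfalso
    rw [Walk.cons_isPath_iff] at hR
    have hcF : c ∈ F := hRs c (by simp)
    have h1 : T.dist y c = T.dist y p + 1 := by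
      rcases adj_dist_cases hT y h with h' | h'
      · exact h'
      · have := hmin c hcF
        omega
    have h2 := dist_add_length hT y R' hR.1 h.symm h1 hR.2
    omega

variable {Γ : Type*} [Group Γ] [MulAction Γ X]

/-- The graph homomorphism given by the action of a group element. -/
def actHom (hact : ∀ (g : Γ) (x y : X), T.Adj x y → T.Adj (g • x) (g • y)) (g : Γ) :
    T →g T where
  toFun := (g • ·)
  map_rel' := fun h' => hact g _ _ h'

lemma tdist_smul (hT : T.IsTree)
    (hact : ∀ (g : Γ) (x y : X), T.Adj x y → T.Adj (g • x) (g • y)) (g : Γ) (x y : X) :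
    T.dist (g • x) (g • y) = T.dist x y := by
  have key : ∀ (g : Γ) (x y : X), T.dist (g • x) (g • y) ≤ T.dist x y := by
    intro g x y
    have := SimpleGraph.dist_le ((tPath hT x y).map (actHom hact g))
    rwa [Walk.length_map, tPath_length] at this
  refine le_antisymm (key g x y) ?_
  have := key g⁻¹ (g • x) (g • y)
  simpa using this

lemma list_map_fix {α : Type*} (f : α → α) :
    ∀ l : List α, l.map f = l → ∀ m ∈ l, f m = m := by
  intro l
  induction l with
  | nil => simp
  | cons a l ih =>
    intro h m hm
    rw [List.map_cons, List.cons_eq_cons] at h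
    rcases List.mem_cons.mp hm with rfl | hm
    · exact h.1
    · exact ih h.2 m hm

lemma smul_mem_path_fixed (hT : T.IsTree)
    (hact : ∀ (g : Γ) (x y : X), T.Adj x y → T.Adj (g • x) (g • y))
    {g : Γ} {x y : X} (hx : g • x = x) (hy : g • y = y) {m : X}
    (hm : m ∈ (tPath hT x y).support) : g • m = m := by
  have hinj : Function.Injective (actHom (T := T) hact g) := MulAction.injective g
  have hP' : (((tPath hT x y).map (actHom hact g)).copy hx hy).IsPath := by
    refine (Walk.isPath_copy _ _ _).mpr ?_
    exact Walk.map_isPath_of_injective hinj (tPath_isPath hT x y)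
  have heq : ((tPath hT x y).map (actHom hact g)).copy hx hy = tPath hT x y :=
    eq_tPath hT _ hP'
  have hsup : (tPath hT x y).support.map (g • ·) = (tPath hT x y).support := by
    have := congrArg Walk.support heq
    have h2 := (Walk.support_copy _ hx hy).symm.trans this
    exact (Walk.support_map (f := actHom hact g) (p := tPath hT x y)).symm.trans h2
  exact list_map_fix _ _ hsup m hm

lemma finset_fixed (hT : T.IsTree)
    (hact : ∀ (g : Γ) (x y : X), T.Adj x y → T.Adj (g • x) (g • y))
    (S : Finset Γ)
    (hcomm : ∀ g ∈ S, ∀ h ∈ S, g * h = h * g)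
    (hell : ∀ g ∈ S, ∃ x : X, g • x = x) :
    ∃ x : X, ∀ g ∈ S, g • x = x := by
  classical
  induction S using Finset.induction_on with
  | empty =>
    obtain ⟨x⟩ := hT.isConnected.nonempty
    exact ⟨x, by simp⟩
  | @insert a s ha ih =>
    obtain ⟨x0, hx0⟩ := ih
      (fun g hg h hh => hcomm _ (Finset.mem_insert_of_mem hg) _ (Finset.mem_insert_of_mem hh))
      (fun g hg => hell g (Finset.mem_insert_of_mem hg))
    set F : Set X := {x | ∀ h ∈ s, h • x = x} with hF
    have hx0F : x0 ∈ F := fun h hh => hx0 h hh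
    obtain ⟨y, hy⟩ := hell a (Finset.mem_insert_self a s)
    have hne : ((T.dist y) '' F).Nonempty := ⟨T.dist y x0, Set.mem_image_of_mem _ hx0F⟩
    obtain ⟨p, hpF, hpd⟩ := Nat.sInf_mem hne
    have hmin : ∀ m ∈ F, T.dist y p ≤ T.dist y m := fun m hm =>
      hpd ▸ Nat.sInf_le (Set.mem_image_of_mem _ hm)
    have haF : ∀ x ∈ F, a • x ∈ F := by
      intro x hx h hh
      have hc := hcomm a (Finset.mem_insert_self _ _) h (Finset.mem_insert_of_mem hh)
      calc h • a • x = (h * a) • x := (mul_smul _ _ _).symm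
        _ = (a * h) • x := by rw [hc]
        _ = a • (h • x) := mul_smul _ _ _
        _ = a • x := by rw [hx h hh]
    have hqF : a • p ∈ F := haF p hpF
    have hdq : T.dist y (a • p) = T.dist y p := by
      conv_lhs => rw [← hy]
      rw [tdist_smul hT hact]
    have hconv : ∀ m ∈ (tPath hT p (a • p)).support, m ∈ F := by
      intro m hm h hh
      exact smul_mem_path_fixed hT hact (hpF h hh) (hqF h hh) hm
    have hfix : p = a • p := proj_unique hT hpF hqF hconv hmin hdq
    refine ⟨p, ?_⟩
    intro g hg
    rcases Finset.mem_insert.mp hg with rfl | hg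
    · exact hfix.symm
    · exact hpF g hg

end TreeLemmas

section RaagLemmas

open scoped commutatorElement

lemma raag_adj_commute {V : Type*} {G : SimpleGraph V} {v w : V} (h : G.Adj v w) :
    Commute (PresentedGroup.of (rels := raagRels G) v) (PresentedGroup.of w) := by
  rw [← commutatorElement_eq_one_iff_commute]
  have hmem : (FreeGroup.of v * FreeGroup.of w * (FreeGroup.of v)⁻¹ * (FreeGroup.of w)⁻¹)
      ∈ Subgroup.normalClosure (raagRels G) :=
    Subgroup.subset_normalClosure ⟨v, w, h, rfl⟩
  have h1 : (QuotientGroup.mk (FreeGroup.of v * FreeGroup.of w * (FreeGroup.of v)⁻¹ *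
      (FreeGroup.of w)⁻¹) : RAAG G) = 1 := (QuotientGroup.eq_one_iff _).mpr hmem
  exact h1

lemma clique_commute {V : Type*} {G : SimpleGraph V} {K : Set V} (hK : G.IsClique K)
    {a b : V} (ha : a ∈ K) (hb : b ∈ K) :
    Commute (PresentedGroup.of (rels := raagRels G) a) (PresentedGroup.of b) := by
  rcases eq_or_ne a b with rfl | hne
  · exact Commute.refl _
  · exact raag_adj_commute (hK ha hb hne)

end RaagLemmas

/-- Suppose the Bestvina–Brady group `H_Γ` acts on a tree by graph automorphisms in
such a way that `v * w⁻¹` fixes a vertex for every directed edge `(v, w)` of `Γ`.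
Then for any clique `K` of `Γ`, the subgroup `H_K` generated by the elements
`v * w⁻¹` with both endpoints in `K` fixes a vertex. -/
theorem bb_clique_subgroup_elliptic {V X : Type*} [Fintype V] (G : SimpleGraph V)
    (T : SimpleGraph X) (hT : T.IsTree) [MulAction ((bbHom G).ker) X]
    (hact : ∀ (g : (bbHom G).ker) (x y : X), T.Adj x y → T.Adj (g • x) (g • y))
    (hell : ∀ g : (bbHom G).ker,
      (∃ v w : V, G.Adj v w ∧
        (g : RAAG G) = PresentedGroup.of v * (PresentedGroup.of w)⁻¹) →
      ∃ x : X, g • x = x)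
    (K : Set V) (hK : G.IsClique K) :
    ∃ x : X, ∀ g ∈ Subgroup.closure
      {g : (bbHom G).ker | ∃ v w : V, v ∈ K ∧ w ∈ K ∧ G.Adj v w ∧
        (g : RAAG G) = PresentedGroup.of v * (PresentedGroup.of w)⁻¹},
      g • x = x := by
  classical
  set S : Set ((bbHom G).ker) := {g | ∃ v w : V, v ∈ K ∧ w ∈ K ∧ G.Adj v w ∧
      (g : RAAG G) = PresentedGroup.of v * (PresentedGroup.of w)⁻¹} with hS
  have hfin : S.Finite := by
    have hsub : S ⊆ ⋃ p : V × V, {g : (bbHom G).ker |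
        (g : RAAG G) = PresentedGroup.of p.1 * (PresentedGroup.of p.2)⁻¹} := by
      rintro g ⟨v, w, -, -, -, hg⟩
      exact Set.mem_iUnion.mpr ⟨(v, w), hg⟩
    refine Set.Finite.subset (Set.finite_iUnion fun p => ?_) hsub
    exact Set.Subsingleton.finite fun g hg h hh => Subtype.ext (hg.trans hh.symm)
  have hcomm : ∀ g ∈ hfin.toFinset, ∀ h ∈ hfin.toFinset, g * h = h * g := by
    intro g hg h hh
    rw [Set.Finite.mem_toFinset] at hg hh
    obtain ⟨v, w, hv, hw, -, hgeq⟩ := hg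
    obtain ⟨v', w', hv', hw', -, hheq⟩ := hh
    have hc : Commute (g : RAAG G) (h : RAAG G) := by
      rw [hgeq, hheq]
      exact Commute.mul_left
        (Commute.mul_right (clique_commute hK hv hv') (clique_commute hK hv hw').inv_right)
        (Commute.mul_right (clique_commute hK hw hv').inv_left
          ((clique_commute hK hw hw').inv_right.inv_left))
    exact Subtype.ext (by
      rw [Subgroup.coe_mul, Subgroup.coe_mul]
      exact hc)
  have hell' : ∀ g ∈ hfin.toFinset, ∃ x : X, g • x = x := by
    intro g hg
    rw [Set.Finite.mem_toFinset] at hg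
    obtain ⟨v, w, hv, hw, hadj, heq⟩ := hg
    exact hell g ⟨v, w, hadj, heq⟩
  obtain ⟨x, hx⟩ := finset_fixed hT hact hfin.toFinset hcomm hell'
  refine ⟨x, fun g hg => ?_⟩
  have hle : Subgroup.closure S ≤ MulAction.stabilizer ((bbHom G).ker) x := by
    rw [Subgroup.closure_le]
    intro g hgS
    exact hx g (hfin.mem_toFinset.mpr hgS)
  exact hle hg
end

section
/- Let Γ be a finite simplicial connected graph containing a separating clique K: the vertex set of Γ∖K is the disjoint union of two nonempty sets V₁ and V₂ with no edges of Γ joining V₁ to V₂, and K is a nonempty set of pairwise adjacent vertices. Let Γ₁ and Γ₂ be the induced subgraphs of Γ on V₁ ∪ K and V₂ ∪ K, respectively. Then the Bestvina–Brady group H_Γ is isomorphic to the amalgamated free product H_{Γ₁} ∗_{H_K} H_{Γ₂}, i.e., the pushout of the diagram H_{Γ₁} ← H_K → H_{Γ₂}, where the two homomorphisms are the restrictions to kernels of the natural homomorphisms A_K → A_{Γ₁} and A_K → A_{Γ₂} induced by the inclusions of induced subgraphs (sending each vertex generator to itself). -/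
lemma raag_commute {V : Type*} {G : SimpleGraph V} {v w : V} (h : G.Adj v w) :
    (PresentedGroup.of v : RAAG G) * PresentedGroup.of w =
      PresentedGroup.of w * PresentedGroup.of v := by
  have hmem : (FreeGroup.of v * FreeGroup.of w * (FreeGroup.of v)⁻¹ * (FreeGroup.of w)⁻¹ :
      FreeGroup V) ∈ Subgroup.normalClosure (raagRels G) :=
    Subgroup.subset_normalClosure ⟨v, w, h, rfl⟩
  open scoped commutatorElement in
  have h1 : ⁅(PresentedGroup.of v : RAAG G), (PresentedGroup.of w : RAAG G)⁆ = 1 := by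
    have h0 := (QuotientGroup.eq_one_iff _).mpr hmem
    rw [commutatorElement_def]
    exact h0
  exact commutatorElement_eq_one_iff_mul_comm.mp h1

/-- The homomorphism `A_{Γ[S]} → A_{Γ[S']}` induced by an inclusion `S ⊆ S'` of
induced subgraphs, sending each vertex generator to itself. -/
def inclHom {V : Type*} (G : SimpleGraph V) {S S' : Set V} (h : S ⊆ S') :
    RAAG (G.induce S) →* RAAG (G.induce S') :=
  PresentedGroup.toGroup
    (f := fun x : S => (PresentedGroup.of (Set.inclusion h x) : RAAG (G.induce S'))) (by
    rintro r ⟨v, w, hadj, rfl⟩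
    simp only [map_mul, map_inv, FreeGroup.lift_apply_of]
    have hadj' : (G.induce S').Adj (Set.inclusion h v) (Set.inclusion h w) := hadj
    rw [mul_inv_eq_one, mul_inv_eq_iff_eq_mul]
    exact raag_commute hadj')

@[simp]
lemma inclHom_of {V : Type*} (G : SimpleGraph V) {S S' : Set V} (h : S ⊆ S') (x : S) :
    inclHom G h (PresentedGroup.of x) = PresentedGroup.of (Set.inclusion h x) :=
  PresentedGroup.toGroup.of _

lemma bbHom_inclHom {V : Type*} (G : SimpleGraph V) {S S' : Set V} (h : S ⊆ S')
    (x : RAAG (G.induce S)) :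
    bbHom (G.induce S') (inclHom G h x) = bbHom (G.induce S) x := by
  have : (bbHom (G.induce S')).comp (inclHom G h) = bbHom (G.induce S) := by
    apply PresentedGroup.ext
    intro y
    simp [bbHom, inclHom]
  exact DFunLike.congr_fun this x

/-- The restriction of `inclHom` to Bestvina–Brady groups: `H_{Γ[S]} → H_{Γ[S']}`. -/
def bbInclHom {V : Type*} (G : SimpleGraph V) {S S' : Set V} (h : S ⊆ S') :
    (bbHom (G.induce S)).ker →* (bbHom (G.induce S')).ker :=
  MonoidHom.codRestrict ((inclHom G h).comp (Subgroup.subtype _)) _ (fun x => by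
    rw [MonoidHom.mem_ker, MonoidHom.comp_apply, Subgroup.coe_subtype, bbHom_inclHom G h]
    exact MonoidHom.mem_ker.mp x.2)
/-- A two-member family of types indexed by `Bool`. -/
def boolFam (T₁ T₂ : Type u) : Bool → Type u := fun b => bif b then T₁ else T₂

instance boolFamGroup {T₁ T₂ : Type u} [Group T₁] [Group T₂] :
    ∀ b, Group (boolFam T₁ T₂ b)
  | true => ‹Group T₁›
  | false => ‹Group T₂›

/-- A pair of homomorphisms out of `H`, as a `Bool`-indexed family. -/
def boolHoms {H : Type*} [Group H] {T₁ T₂ : Type u} [Group T₁] [Group T₂]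
    (f₁ : H →* T₁) (f₂ : H →* T₂) : ∀ b, H →* boolFam T₁ T₂ b
  | true => f₁
  | false => f₂

namespace BBAux

open PresentedGroup Monoid

variable {V : Type*} (G : SimpleGraph V)

@[simp]
lemma bbHom_of (v : V) : bbHom G (PresentedGroup.of v) = Multiplicative.ofAdd 1 :=
  PresentedGroup.toGroup.of _

/-- Inclusion of the RAAG of an induced subgraph into the RAAG of the whole graph. -/
def inclHomF (S : Set V) : RAAG (G.induce S) →* RAAG G :=
  PresentedGroup.toGroup
    (f := fun x : S => (PresentedGroup.of (x : V) : RAAG G)) (by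
    rintro r ⟨v, w, hadj, rfl⟩
    simp only [map_mul, map_inv, FreeGroup.lift_apply_of]
    rw [mul_inv_eq_one, mul_inv_eq_iff_eq_mul]
    exact raag_commute hadj)

@[simp]
lemma inclHomF_of (S : Set V) (x : S) :
    inclHomF G S (PresentedGroup.of x) = PresentedGroup.of (x : V) :=
  PresentedGroup.toGroup.of _

lemma bbHom_inclHomF (S : Set V) (x : RAAG (G.induce S)) :
    bbHom G (inclHomF G S x) = bbHom (G.induce S) x := by
  have : (bbHom G).comp (inclHomF G S) = bbHom (G.induce S) := by
    apply PresentedGroup.ext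
    intro y
    simp
  exact DFunLike.congr_fun this x

/-- Restriction of `inclHomF` to Bestvina–Brady groups. -/
def bbInclHomF (S : Set V) : (bbHom (G.induce S)).ker →* (bbHom G).ker :=
  MonoidHom.codRestrict ((inclHomF G S).comp (Subgroup.subtype _)) _ (fun x => by
    rw [MonoidHom.mem_ker, MonoidHom.comp_apply, Subgroup.coe_subtype, bbHom_inclHomF G S]
    exact MonoidHom.mem_ker.mp x.2)

@[simp]
lemma bbInclHomF_coe (S : Set V) (x : (bbHom (G.induce S)).ker) :
    (bbInclHomF G S x : RAAG G) = inclHomF G S x.1 := rfl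

@[simp]
lemma bbInclHom_coe {S S' : Set V} (h : S ⊆ S') (x : (bbHom (G.induce S)).ker) :
    (bbInclHom G h x : RAAG (G.induce S')) = inclHom G h x.1 := rfl

lemma inclHomF_comp_inclHom {S S' : Set V} (h : S ⊆ S') :
    (inclHomF G S').comp (inclHom G h) = inclHomF G S :=
  PresentedGroup.ext (fun x => by simp [Set.inclusion])

lemma zpow_conj_comm {A B : Type*} [Group A] [Group B] (F : A →* B)
    (a : MulAut A) (b : MulAut B) (h : ∀ x, F (a x) = b (F x)) :
    ∀ (n : ℤ) (x : A), F ((a ^ n) x) = (b ^ n) (F x) := by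
  have h' : ∀ x, F (a⁻¹ x) = b⁻¹ (F x) := by
    intro x
    have := h (a⁻¹ x)
    rw [MulAut.apply_inv_self] at this
    rw [this, MulAut.inv_apply_self]
  intro n
  induction n using Int.induction_on with
  | zero => simp
  | succ k ih =>
      intro x
      have : a ^ ((k : ℤ) + 1) = a ^ (k : ℤ) * a := by rw [zpow_add, zpow_one]
      rw [this, MulAut.mul_apply, ih, h, show b ^ ((k : ℤ) + 1) = b ^ (k : ℤ) * b by
        rw [zpow_add, zpow_one], MulAut.mul_apply]
  | pred k ih =>
      intro x
      have : a ^ (-(k : ℤ) - 1) = a ^ (-(k : ℤ)) * a⁻¹ := by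
        rw [← zpow_neg_one, ← zpow_add]; ring_nf
      rw [this, MulAut.mul_apply, ih, h', show b ^ (-(k : ℤ) - 1) = b ^ (-(k : ℤ)) * b⁻¹ by
        rw [← zpow_neg_one, ← zpow_add]; ring_nf, MulAut.mul_apply]

end BBAux
namespace BBAux

variable {V : Type*} (G : SimpleGraph V)

/-- The element `v k₀⁻¹` of the Bestvina–Brady group of `G.induce S`. -/
def hgen {k₀ : V} {S : Set V} (hk : k₀ ∈ S) {v : V} (hv : v ∈ S) :
    (bbHom (G.induce S)).ker :=
  ⟨PresentedGroup.of ⟨v, hv⟩ * (PresentedGroup.of ⟨k₀, hk⟩)⁻¹, by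
    simp [MonoidHom.mem_ker]⟩

/-- Conjugation by the generator `k₀` as an automorphism of the BB group. -/
def conjA {k₀ : V} {S : Set V} (hk : k₀ ∈ S) : MulAut ((bbHom (G.induce S)).ker) :=
  MulAut.conjNormal (PresentedGroup.of ⟨k₀, hk⟩)

lemma hgen_comm {k₀ : V} {S : Set V} (hk : k₀ ∈ S) {v w : V} (hv : v ∈ S) (hw : w ∈ S)
    (hadj : G.Adj v w) :
    hgen G hk hv * conjA G hk (hgen G hk hw) =
      hgen G hk hw * conjA G hk (hgen G hk hv) := by
  have hc := raag_commute (G := G.induce S) (v := ⟨v, hv⟩) (w := ⟨w, hw⟩) hadj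
  apply Subtype.ext
  simp only [Subgroup.coe_mul, conjA, MulAut.conjNormal_apply, hgen, mul_assoc,
    inv_mul_cancel_left]
  rw [← mul_assoc, ← mul_assoc, hc]
  simp [mul_assoc]


lemma bbInclHom_hgen {k₀ : V} {S S' : Set V} (h : S ⊆ S') (hk : k₀ ∈ S) {v : V} (hv : v ∈ S) :
    bbInclHom G h (hgen G hk hv) = hgen G (h hk) (h hv) :=
  Subtype.ext (by simp [hgen, Set.inclusion])

lemma bbInclHomF_hgen {k₀ : V} {S : Set V} (hk : k₀ ∈ S) {v : V} (hv : v ∈ S) :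
    (bbInclHomF G S (hgen G hk hv) : RAAG G) =
      PresentedGroup.of v * (PresentedGroup.of k₀)⁻¹ := by
  simp [hgen]

lemma bbInclHom_conjA {k₀ : V} {S S' : Set V} (h : S ⊆ S') (hk : k₀ ∈ S)
    (x : (bbHom (G.induce S)).ker) :
    bbInclHom G h (conjA G hk x) = conjA G (h hk) (bbInclHom G h x) :=
  Subtype.ext (by simp [conjA, MulAut.conjNormal_apply, Set.inclusion])

lemma bbInclHomF_conjA {k₀ : V} {S : Set V} (hk : k₀ ∈ S)
    (x : (bbHom (G.induce S)).ker) :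
    (bbInclHomF G S (conjA G hk x) : RAAG G) =
      PresentedGroup.of k₀ * (bbInclHomF G S x : RAAG G) * (PresentedGroup.of k₀)⁻¹ := by
  simp [conjA, MulAut.conjNormal_apply]

lemma bbInclHom_conjA_inv {k₀ : V} {S S' : Set V} (h : S ⊆ S') (hk : k₀ ∈ S)
    (x : (bbHom (G.induce S)).ker) :
    bbInclHom G h ((conjA G hk)⁻¹ x) = (conjA G (h hk))⁻¹ (bbInclHom G h x) :=
  Subtype.ext (by simp [conjA, MulAut.conjNormal_inv_apply, Set.inclusion])

lemma mem2 {K V₁ V₂ : Set V} (hcover : V₁ ∪ V₂ = Kᶜ) {v : V} (h : v ∉ V₁ ∪ K) :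
    v ∈ V₂ ∪ K := by
  by_cases hK : v ∈ K
  · exact Set.mem_union_right _ hK
  · have hv : v ∈ V₁ ∪ V₂ := hcover ▸ hK
    rcases hv with h1 | h2
    · exact absurd (Set.mem_union_left _ h1) h
    · exact Set.mem_union_left _ h2

lemma vtri {K V₁ V₂ : Set V} (hcover : V₁ ∪ V₂ = Kᶜ) (v : V) :
    v ∈ V₁ ∨ v ∈ V₂ ∨ v ∈ K := by
  by_cases hK : v ∈ K
  · exact Or.inr (Or.inr hK)
  · have hv : v ∈ V₁ ∪ V₂ := hcover ▸ hK
    rcases hv with h1 | h2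
    · exact Or.inl h1
    · exact Or.inr (Or.inl h2)

lemma adj_side {K V₁ V₂ : Set V} (hcover : V₁ ∪ V₂ = Kᶜ)
    (hnoedge : ∀ a ∈ V₁, ∀ b ∈ V₂, ¬ G.Adj a b) {v w : V} (hadj : G.Adj v w) :
    (v ∈ V₁ ∪ K ∧ w ∈ V₁ ∪ K) ∨ (v ∈ V₂ ∪ K ∧ w ∈ V₂ ∪ K) := by
  rcases vtri hcover v with hv | hv | hv
  · refine Or.inl ⟨Set.mem_union_left _ hv, ?_⟩
    rcases vtri hcover w with hw | hw | hw
    · exact Set.mem_union_left _ hw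
    · exact absurd hadj (hnoedge v hv w hw)
    · exact Set.mem_union_right _ hw
  · refine Or.inr ⟨Set.mem_union_left _ hv, ?_⟩
    rcases vtri hcover w with hw | hw | hw
    · exact absurd hadj.symm (hnoedge w hw v hv)
    · exact Set.mem_union_left _ hw
    · exact Set.mem_union_right _ hw
  · rcases vtri hcover w with hw | hw | hw
    · exact Or.inl ⟨Set.mem_union_right _ hv, Set.mem_union_left _ hw⟩
    · exact Or.inr ⟨Set.mem_union_right _ hv, Set.mem_union_left _ hw⟩
    · exact Or.inl ⟨Set.mem_union_right _ hv, Set.mem_union_right _ hw⟩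

end BBAux
namespace BBAux

open Monoid

variable {V : Type*} (G : SimpleGraph V) (K V₁ V₂ : Set V)

/-- The pushout of the Bestvina–Brady groups. -/
abbrev BBP : Type _ := Monoid.PushoutI (boolHoms
  (bbInclHom G (Set.subset_union_right : K ⊆ V₁ ∪ K))
  (bbInclHom G (Set.subset_union_right : K ⊆ V₂ ∪ K)))

/-- The first structure map into the pushout. -/
def ofT : (bbHom (G.induce (V₁ ∪ K))).ker →* BBP G K V₁ V₂ :=
  PushoutI.of (φ := boolHoms
    (bbInclHom G (Set.subset_union_right : K ⊆ V₁ ∪ K))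
    (bbInclHom G (Set.subset_union_right : K ⊆ V₂ ∪ K))) true

/-- The second structure map into the pushout. -/
def ofF : (bbHom (G.induce (V₂ ∪ K))).ker →* BBP G K V₁ V₂ :=
  PushoutI.of (φ := boolHoms
    (bbInclHom G (Set.subset_union_right : K ⊆ V₁ ∪ K))
    (bbInclHom G (Set.subset_union_right : K ⊆ V₂ ∪ K))) false

lemma ofT_incl (x : (bbHom (G.induce K)).ker) :
    ofT G K V₁ V₂ (bbInclHom G Set.subset_union_right x) = PushoutI.base _ x :=
  PushoutI.of_apply_eq_base (boolHoms
    (bbInclHom G (Set.subset_union_right : K ⊆ V₁ ∪ K))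
    (bbInclHom G (Set.subset_union_right : K ⊆ V₂ ∪ K))) true x

lemma ofF_incl (x : (bbHom (G.induce K)).ker) :
    ofF G K V₁ V₂ (bbInclHom G Set.subset_union_right x) = PushoutI.base _ x :=
  PushoutI.of_apply_eq_base (boolHoms
    (bbInclHom G (Set.subset_union_right : K ⊆ V₁ ∪ K))
    (bbInclHom G (Set.subset_union_right : K ⊆ V₂ ∪ K))) false x

variable {k₀ : V} (hk₀ : k₀ ∈ K)

open scoped Classical in
/-- The map sending a vertex `v` to the image of `v k₀⁻¹` in the pushout. -/
noncomputable def theta (hcover : V₁ ∪ V₂ = Kᶜ) (v : V) : BBP G K V₁ V₂ :=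
  if h : v ∈ V₁ ∪ K then ofT G K V₁ V₂ (hgen G (Set.mem_union_right _ hk₀) h)
  else ofF G K V₁ V₂ (hgen G (Set.mem_union_right _ hk₀) (mem2 hcover h))

lemma theta_mem1 (hcover : V₁ ∪ V₂ = Kᶜ) {v : V} (h : v ∈ V₁ ∪ K) :
    theta G K V₁ V₂ hk₀ hcover v =
      ofT G K V₁ V₂ (hgen G (Set.mem_union_right _ hk₀) h) := by
  unfold theta
  rw [dif_pos h]

lemma theta_memK (hcover : V₁ ∪ V₂ = Kᶜ) {v : V} (hv : v ∈ K) :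
    ofT G K V₁ V₂ (hgen G (Set.mem_union_right _ hk₀) (Set.mem_union_right _ hv)) =
      ofF G K V₁ V₂ (hgen G (Set.mem_union_right _ hk₀) (Set.mem_union_right _ hv)) := by
  rw [← bbInclHom_hgen G (Set.subset_union_right : K ⊆ V₁ ∪ K) hk₀ hv,
    ← bbInclHom_hgen G (Set.subset_union_right : K ⊆ V₂ ∪ K) hk₀ hv,
    ofT_incl, ofF_incl]

lemma theta_mem2 (hcover : V₁ ∪ V₂ = Kᶜ) (hdisj : Disjoint V₁ V₂) {v : V}
    (h : v ∈ V₂ ∪ K) :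
    theta G K V₁ V₂ hk₀ hcover v =
      ofF G K V₁ V₂ (hgen G (Set.mem_union_right _ hk₀) h) := by
  by_cases h1 : v ∈ V₁ ∪ K
  · have hvK : v ∈ K := by
      rcases h1 with h1 | h1
      · rcases h with h2 | h2
        · exact absurd (Set.disjoint_left.mp hdisj h1) (not_not_intro h2)
        · exact h2
      · exact h1
    rw [theta_mem1 G K V₁ V₂ hk₀ hcover h1]
    exact theta_memK G K V₁ V₂ hk₀ hcover hvK
  · unfold theta
    rw [dif_neg h1]

/-- The two components of the conjugation endomorphism of the pushout. -/
def betaHoms : ∀ b, boolFam (bbHom (G.induce (V₁ ∪ K))).ker (bbHom (G.induce (V₂ ∪ K))).ker b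
    →* BBP G K V₁ V₂
  | true => (ofT G K V₁ V₂).comp (conjA G (Set.mem_union_right V₁ hk₀)).toMonoidHom
  | false => (ofF G K V₁ V₂).comp (conjA G (Set.mem_union_right V₂ hk₀)).toMonoidHom

/-- The inverses of the two components. -/
def betaHoms' : ∀ b, boolFam (bbHom (G.induce (V₁ ∪ K))).ker (bbHom (G.induce (V₂ ∪ K))).ker b
    →* BBP G K V₁ V₂
  | true => (ofT G K V₁ V₂).comp ((conjA G (Set.mem_union_right V₁ hk₀))⁻¹ : MulAut _).toMonoidHom
  | false => (ofF G K V₁ V₂).comp ((conjA G (Set.mem_union_right V₂ hk₀))⁻¹ : MulAut _).toMonoidHom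

/-- Conjugation by `k₀` as an endomorphism of the pushout. -/
def betaF : BBP G K V₁ V₂ →* BBP G K V₁ V₂ :=
  PushoutI.lift (betaHoms G K V₁ V₂ hk₀)
    ((PushoutI.base _).comp (conjA G hk₀).toMonoidHom) (by
      rintro (_ | _) <;> refine MonoidHom.ext fun x => ?_
      · show ofF G K V₁ V₂ (conjA G (Set.mem_union_right V₂ hk₀) (bbInclHom G _ x)) =
          PushoutI.base _ (conjA G hk₀ x)
        exact (congrArg (ofF G K V₁ V₂)
          (bbInclHom_conjA G (Set.subset_union_right : K ⊆ V₂ ∪ K) hk₀ x).symm).trans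
          (ofF_incl G K V₁ V₂ _)
      · show ofT G K V₁ V₂ (conjA G (Set.mem_union_right V₁ hk₀) (bbInclHom G _ x)) =
          PushoutI.base _ (conjA G hk₀ x)
        exact (congrArg (ofT G K V₁ V₂)
          (bbInclHom_conjA G (Set.subset_union_right : K ⊆ V₁ ∪ K) hk₀ x).symm).trans
          (ofT_incl G K V₁ V₂ _))

/-- Conjugation by `k₀⁻¹` as an endomorphism of the pushout. -/
def betaG : BBP G K V₁ V₂ →* BBP G K V₁ V₂ :=
  PushoutI.lift (betaHoms' G K V₁ V₂ hk₀)
    ((PushoutI.base _).comp ((conjA G hk₀)⁻¹ : MulAut _).toMonoidHom) (by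
      rintro (_ | _) <;> refine MonoidHom.ext fun x => ?_
      · show ofF G K V₁ V₂ ((conjA G (Set.mem_union_right V₂ hk₀))⁻¹ (bbInclHom G _ x)) =
          PushoutI.base _ ((conjA G hk₀)⁻¹ x)
        exact (congrArg (ofF G K V₁ V₂)
          (bbInclHom_conjA_inv G (Set.subset_union_right : K ⊆ V₂ ∪ K) hk₀ x).symm).trans
          (ofF_incl G K V₁ V₂ _)
      · show ofT G K V₁ V₂ ((conjA G (Set.mem_union_right V₁ hk₀))⁻¹ (bbInclHom G _ x)) =
          PushoutI.base _ ((conjA G hk₀)⁻¹ x)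
        exact (congrArg (ofT G K V₁ V₂)
          (bbInclHom_conjA_inv G (Set.subset_union_right : K ⊆ V₁ ∪ K) hk₀ x).symm).trans
          (ofT_incl G K V₁ V₂ _))

lemma betaF_ofT (x : (bbHom (G.induce (V₁ ∪ K))).ker) :
    betaF G K V₁ V₂ hk₀ (ofT G K V₁ V₂ x) =
      ofT G K V₁ V₂ (conjA G (Set.mem_union_right V₁ hk₀) x) :=
  PushoutI.lift_of _ _ _ _

lemma betaF_ofF (x : (bbHom (G.induce (V₂ ∪ K))).ker) :
    betaF G K V₁ V₂ hk₀ (ofF G K V₁ V₂ x) =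
      ofF G K V₁ V₂ (conjA G (Set.mem_union_right V₂ hk₀) x) :=
  PushoutI.lift_of _ _ _ _

lemma betaG_ofT (x : (bbHom (G.induce (V₁ ∪ K))).ker) :
    betaG G K V₁ V₂ hk₀ (ofT G K V₁ V₂ x) =
      ofT G K V₁ V₂ ((conjA G (Set.mem_union_right V₁ hk₀))⁻¹ x) :=
  PushoutI.lift_of _ _ _ _

lemma betaG_ofF (x : (bbHom (G.induce (V₂ ∪ K))).ker) :
    betaG G K V₁ V₂ hk₀ (ofF G K V₁ V₂ x) =
      ofF G K V₁ V₂ ((conjA G (Set.mem_union_right V₂ hk₀))⁻¹ x) :=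
  PushoutI.lift_of _ _ _ _

/-- Conjugation by `k₀` as an automorphism of the pushout. -/
def beta : MulAut (BBP G K V₁ V₂) :=
  MonoidHom.toMulEquiv (betaF G K V₁ V₂ hk₀) (betaG G K V₁ V₂ hk₀)
    (by
      apply PushoutI.hom_ext_nonempty
      rintro (_ | _) <;> refine MonoidHom.ext fun x => ?_
      · show betaG G K V₁ V₂ hk₀ (betaF G K V₁ V₂ hk₀ (ofF G K V₁ V₂ x)) = ofF G K V₁ V₂ x
        change (bbHom (G.induce (V₂ ∪ K))).ker at x
        rw [betaF_ofF, betaG_ofF, MulAut.inv_apply_self]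
      · show betaG G K V₁ V₂ hk₀ (betaF G K V₁ V₂ hk₀ (ofT G K V₁ V₂ x)) = ofT G K V₁ V₂ x
        change (bbHom (G.induce (V₁ ∪ K))).ker at x
        rw [betaF_ofT, betaG_ofT, MulAut.inv_apply_self])
    (by
      apply PushoutI.hom_ext_nonempty
      rintro (_ | _) <;> refine MonoidHom.ext fun x => ?_
      · show betaF G K V₁ V₂ hk₀ (betaG G K V₁ V₂ hk₀ (ofF G K V₁ V₂ x)) = ofF G K V₁ V₂ x
        change (bbHom (G.induce (V₂ ∪ K))).ker at x
        rw [betaG_ofF, betaF_ofF, MulAut.apply_inv_self]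
      · show betaF G K V₁ V₂ hk₀ (betaG G K V₁ V₂ hk₀ (ofT G K V₁ V₂ x)) = ofT G K V₁ V₂ x
        change (bbHom (G.induce (V₁ ∪ K))).ker at x
        rw [betaG_ofT, betaF_ofT, MulAut.apply_inv_self])

end BBAux
namespace BBAux

open Monoid Multiplicative

variable {V : Type*} (G : SimpleGraph V) (K V₁ V₂ : Set V) {k₀ : V} (hk₀ : k₀ ∈ K)

/-- The action of `ℤ` on the pushout by powers of `beta`. -/
def rho : Multiplicative ℤ →* MulAut (BBP G K V₁ V₂) :=
  zpowersHom _ (beta G K V₁ V₂ hk₀)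

/-- The semidirect product of the pushout with `ℤ`. -/
abbrev SDP : Type _ := SemidirectProduct (BBP G K V₁ V₂) (Multiplicative ℤ)
  (rho G K V₁ V₂ hk₀)

lemma rho_apply (g : Multiplicative ℤ) :
    rho G K V₁ V₂ hk₀ g = beta G K V₁ V₂ hk₀ ^ g.toAdd := rfl

lemma beta_apply (x : BBP G K V₁ V₂) :
    beta G K V₁ V₂ hk₀ x = betaF G K V₁ V₂ hk₀ x := rfl

lemma rho_ofAdd_one (x : BBP G K V₁ V₂) :
    rho G K V₁ V₂ hk₀ (ofAdd 1) x = betaF G K V₁ V₂ hk₀ x := by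
  rw [rho_apply]
  norm_num
  exact beta_apply G K V₁ V₂ hk₀ x

/-- The key homomorphism `A_Γ → P ⋊ ℤ`. -/
noncomputable def ThetaG (hcover : V₁ ∪ V₂ = Kᶜ) (hdisj : Disjoint V₁ V₂)
    (hnoedge : ∀ a ∈ V₁, ∀ b ∈ V₂, ¬ G.Adj a b) : RAAG G →* SDP G K V₁ V₂ hk₀ :=
  PresentedGroup.toGroup
    (f := fun v => ⟨theta G K V₁ V₂ hk₀ hcover v, ofAdd 1⟩) (by
    rintro r ⟨v, w, hadj, rfl⟩
    simp only [map_mul, map_inv, FreeGroup.lift_apply_of]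
    rw [mul_inv_eq_one, mul_inv_eq_iff_eq_mul]
    rw [SemidirectProduct.mul_def, SemidirectProduct.mul_def]
    congr 1
    rcases adj_side G hcover hnoedge hadj with ⟨hv, hw⟩ | ⟨hv, hw⟩
    · rw [theta_mem1 G K V₁ V₂ hk₀ hcover hv, theta_mem1 G K V₁ V₂ hk₀ hcover hw,
        rho_ofAdd_one, rho_ofAdd_one, betaF_ofT, betaF_ofT, ← map_mul, ← map_mul,
        hgen_comm G _ hv hw hadj]
    · rw [theta_mem2 G K V₁ V₂ hk₀ hcover hdisj hv, theta_mem2 G K V₁ V₂ hk₀ hcover hdisj hw,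
        rho_ofAdd_one, rho_ofAdd_one, betaF_ofF, betaF_ofF, ← map_mul, ← map_mul,
        hgen_comm G _ hv hw hadj])


lemma rightHom_comp_ThetaG (hcover : V₁ ∪ V₂ = Kᶜ) (hdisj : Disjoint V₁ V₂)
    (hnoedge : ∀ a ∈ V₁, ∀ b ∈ V₂, ¬ G.Adj a b) :
    (SemidirectProduct.rightHom).comp (ThetaG G K V₁ V₂ hk₀ hcover hdisj hnoedge) = bbHom G :=
  PresentedGroup.ext fun v => by
    simp only [MonoidHom.comp_apply, ThetaG, PresentedGroup.toGroup.of, bbHom_of]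
    rfl

lemma ThetaG_right (hcover : V₁ ∪ V₂ = Kᶜ) (hdisj : Disjoint V₁ V₂)
    (hnoedge : ∀ a ∈ V₁, ∀ b ∈ V₂, ¬ G.Adj a b) (g : RAAG G) :
    (ThetaG G K V₁ V₂ hk₀ hcover hdisj hnoedge g).right = bbHom G g :=
  DFunLike.congr_fun (rightHom_comp_ThetaG G K V₁ V₂ hk₀ hcover hdisj hnoedge) g

/-- The homomorphism from the Bestvina–Brady group of `Γ` to the pushout. -/
noncomputable def psi (hcover : V₁ ∪ V₂ = Kᶜ) (hdisj : Disjoint V₁ V₂)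
    (hnoedge : ∀ a ∈ V₁, ∀ b ∈ V₂, ¬ G.Adj a b) :
    (bbHom G).ker →* BBP G K V₁ V₂ where
  toFun x := (ThetaG G K V₁ V₂ hk₀ hcover hdisj hnoedge x.1).left
  map_one' := by simp
  map_mul' x y := by
    have hx : (ThetaG G K V₁ V₂ hk₀ hcover hdisj hnoedge x.1).right = 1 := by
      rw [ThetaG_right]
      exact x.2
    show (ThetaG G K V₁ V₂ hk₀ hcover hdisj hnoedge (x.1 * y.1)).left = _
    rw [map_mul, SemidirectProduct.mul_left, hx, map_one, MulAut.one_apply]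

/-- The two components of the map from the pushout to the Bestvina–Brady group of `Γ`. -/
def phiHoms : ∀ b, boolFam (bbHom (G.induce (V₁ ∪ K))).ker (bbHom (G.induce (V₂ ∪ K))).ker b
    →* (bbHom G).ker
  | true => bbInclHomF G (V₁ ∪ K)
  | false => bbInclHomF G (V₂ ∪ K)

/-- The homomorphism from the pushout to the Bestvina–Brady group of `Γ`. -/
def phi : BBP G K V₁ V₂ →* (bbHom G).ker :=
  PushoutI.lift (phiHoms G K V₁ V₂) (bbInclHomF G K) (by
    rintro (_ | _) <;> refine MonoidHom.ext fun x => Subtype.ext ?_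
    · show inclHomF G (V₂ ∪ K) (inclHom G _ x.1) = inclHomF G K x.1
      exact DFunLike.congr_fun
        (inclHomF_comp_inclHom G (Set.subset_union_right : K ⊆ V₂ ∪ K)) x.1
    · show inclHomF G (V₁ ∪ K) (inclHom G _ x.1) = inclHomF G K x.1
      exact DFunLike.congr_fun
        (inclHomF_comp_inclHom G (Set.subset_union_right : K ⊆ V₁ ∪ K)) x.1)

lemma phi_ofT (x : (bbHom (G.induce (V₁ ∪ K))).ker) :
    phi G K V₁ V₂ (ofT G K V₁ V₂ x) = bbInclHomF G (V₁ ∪ K) x :=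
  PushoutI.lift_of _ _ _ _

lemma phi_ofF (x : (bbHom (G.induce (V₂ ∪ K))).ker) :
    phi G K V₁ V₂ (ofF G K V₁ V₂ x) = bbInclHomF G (V₂ ∪ K) x :=
  PushoutI.lift_of _ _ _ _

end BBAux
namespace BBAux

open Monoid Multiplicative

variable {V : Type*} (G : SimpleGraph V) (K V₁ V₂ : Set V) {k₀ : V} (hk₀ : k₀ ∈ K)

/-- The composite `P → H_Γ → A_Γ`. -/
def phiSub : BBP G K V₁ V₂ →* RAAG G :=
  (Subgroup.subtype _).comp (phi G K V₁ V₂)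

lemma phiSub_apply (q : BBP G K V₁ V₂) :
    phiSub G K V₁ V₂ q = (phi G K V₁ V₂ q : RAAG G) := rfl

lemma phiSub_betaF :
    (phiSub G K V₁ V₂).comp (betaF G K V₁ V₂ hk₀) =
      ((MulAut.conj (PresentedGroup.of k₀ : RAAG G)).toMonoidHom).comp (phiSub G K V₁ V₂) := by
  apply PushoutI.hom_ext_nonempty
  rintro (_ | _) <;> refine MonoidHom.ext fun x => ?_
  · show phiSub G K V₁ V₂ (betaF G K V₁ V₂ hk₀ (ofF G K V₁ V₂ x)) =
      MulAut.conj (PresentedGroup.of k₀ : RAAG G) (phiSub G K V₁ V₂ (ofF G K V₁ V₂ x))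
    show (phi G K V₁ V₂ (betaF G K V₁ V₂ hk₀ (ofF G K V₁ V₂ x)) : RAAG G) =
      MulAut.conj (PresentedGroup.of k₀ : RAAG G) (phi G K V₁ V₂ (ofF G K V₁ V₂ x) : RAAG G)
    change (bbHom (G.induce (V₂ ∪ K))).ker at x
    rw [betaF_ofF, phi_ofF, phi_ofF, bbInclHomF_conjA, MulAut.conj_apply]
  · show (phi G K V₁ V₂ (betaF G K V₁ V₂ hk₀ (ofT G K V₁ V₂ x)) : RAAG G) =
      MulAut.conj (PresentedGroup.of k₀ : RAAG G) (phi G K V₁ V₂ (ofT G K V₁ V₂ x) : RAAG G)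
    change (bbHom (G.induce (V₁ ∪ K))).ker at x
    rw [betaF_ofT, phi_ofT, phi_ofT, bbInclHomF_conjA, MulAut.conj_apply]

lemma phiSub_beta (q : BBP G K V₁ V₂) :
    phiSub G K V₁ V₂ (beta G K V₁ V₂ hk₀ q) =
      MulAut.conj (PresentedGroup.of k₀ : RAAG G) (phiSub G K V₁ V₂ q) :=
  DFunLike.congr_fun (phiSub_betaF G K V₁ V₂ hk₀) q

/-- The retraction `P ⋊ ℤ → A_Γ`. -/
def xiF : SDP G K V₁ V₂ hk₀ →* RAAG G :=
  SemidirectProduct.lift (phiSub G K V₁ V₂)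
    (zpowersHom _ (PresentedGroup.of k₀ : RAAG G)) (by
      intro g
      refine MonoidHom.ext fun p => ?_
      have key := zpow_conj_comm (phiSub G K V₁ V₂) (beta G K V₁ V₂ hk₀)
        (MulAut.conj (PresentedGroup.of k₀ : RAAG G))
        (phiSub_beta G K V₁ V₂ hk₀) g.toAdd p
      show phiSub G K V₁ V₂ ((rho G K V₁ V₂ hk₀ g) p) =
        MulAut.conj ((PresentedGroup.of k₀ : RAAG G) ^ g.toAdd) (phiSub G K V₁ V₂ p)
      rw [rho_apply, key, map_zpow])

lemma xiF_apply (a : SDP G K V₁ V₂ hk₀) :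
    xiF G K V₁ V₂ hk₀ a =
      phiSub G K V₁ V₂ a.left * (PresentedGroup.of k₀ : RAAG G) ^ a.right.toAdd := rfl

lemma xiF_ThetaG (hcover : V₁ ∪ V₂ = Kᶜ) (hdisj : Disjoint V₁ V₂)
    (hnoedge : ∀ a ∈ V₁, ∀ b ∈ V₂, ¬ G.Adj a b) :
    (xiF G K V₁ V₂ hk₀).comp (ThetaG G K V₁ V₂ hk₀ hcover hdisj hnoedge) =
      MonoidHom.id (RAAG G) :=
  PresentedGroup.ext fun v => by
    simp only [MonoidHom.comp_apply, ThetaG, PresentedGroup.toGroup.of, MonoidHom.id_apply]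
    rw [xiF_apply]
    show phiSub G K V₁ V₂ (theta G K V₁ V₂ hk₀ hcover v) *
      (PresentedGroup.of k₀ : RAAG G) ^ (ofAdd (1 : ℤ)).toAdd = PresentedGroup.of v
    by_cases hv : v ∈ V₁ ∪ K
    · rw [theta_mem1 G K V₁ V₂ hk₀ hcover hv, phiSub_apply, phi_ofT, bbInclHomF_hgen]
      simp
    · rw [theta_mem2 G K V₁ V₂ hk₀ hcover hdisj (mem2 hcover hv), phiSub_apply, phi_ofF,
        bbInclHomF_hgen]
      simp

lemma phi_psi (hcover : V₁ ∪ V₂ = Kᶜ) (hdisj : Disjoint V₁ V₂)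
    (hnoedge : ∀ a ∈ V₁, ∀ b ∈ V₂, ¬ G.Adj a b) (x : (bbHom G).ker) :
    phi G K V₁ V₂ (psi G K V₁ V₂ hk₀ hcover hdisj hnoedge x) = x := by
  apply Subtype.ext
  have hr : (ThetaG G K V₁ V₂ hk₀ hcover hdisj hnoedge x.1).right = 1 := by
    rw [ThetaG_right]
    exact x.2
  have hx : x.1 = xiF G K V₁ V₂ hk₀ (ThetaG G K V₁ V₂ hk₀ hcover hdisj hnoedge x.1) :=
    (DFunLike.congr_fun (xiF_ThetaG G K V₁ V₂ hk₀ hcover hdisj hnoedge) x.1).symm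
  calc (phi G K V₁ V₂ (psi G K V₁ V₂ hk₀ hcover hdisj hnoedge x) : RAAG G)
      = phiSub G K V₁ V₂ ((ThetaG G K V₁ V₂ hk₀ hcover hdisj hnoedge x.1).left) := rfl
    _ = xiF G K V₁ V₂ hk₀ (ThetaG G K V₁ V₂ hk₀ hcover hdisj hnoedge x.1) := by
        rw [xiF_apply, hr]
        simp
    _ = x.1 := hx.symm

end BBAux
namespace BBAux

open Monoid Multiplicative

variable {V : Type*} (G : SimpleGraph V) (K V₁ V₂ : Set V) {k₀ : V} (hk₀ : k₀ ∈ K)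

/-- Division by the appropriate power of `k₀`, mapping into the BB group. -/
def pdiv {S : Set V} (hk : k₀ ∈ S) (g : RAAG (G.induce S)) : (bbHom (G.induce S)).ker :=
  ⟨g * (PresentedGroup.of ⟨k₀, hk⟩ : RAAG (G.induce S)) ^ (-(bbHom (G.induce S) g).toAdd), by
    rw [MonoidHom.mem_ker, map_mul, map_zpow, bbHom_of]
    apply Multiplicative.toAdd.injective
    simp [toAdd_zpow]⟩

lemma pdiv_mul {S : Set V} (hk : k₀ ∈ S) (g g' : RAAG (G.induce S)) :
    pdiv G hk (g * g') = pdiv G hk g *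
      ((conjA G hk ^ (bbHom (G.induce S) g).toAdd) (pdiv G hk g')) := by
  apply Subtype.ext
  show g * g' * _ = (g * _) * (((conjA G hk ^ (bbHom (G.induce S) g).toAdd)
    (pdiv G hk g') : RAAG (G.induce S)))
  rw [show conjA G hk ^ (bbHom (G.induce S) g).toAdd =
    MulAut.conjNormal ((PresentedGroup.of ⟨k₀, hk⟩ : RAAG (G.induce S)) ^
      (bbHom (G.induce S) g).toAdd) from (map_zpow MulAut.conjNormal _ _).symm,
    MulAut.conjNormal_apply]
  show g * g' * (PresentedGroup.of ⟨k₀, hk⟩ : RAAG (G.induce S)) ^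
      (-(bbHom (G.induce S) (g * g')).toAdd) = _
  rw [map_mul, toAdd_mul]
  rw [show (pdiv G hk g' : RAAG (G.induce S)) = g' *
    (PresentedGroup.of ⟨k₀, hk⟩ : RAAG (G.induce S)) ^
      (-(bbHom (G.induce S) g').toAdd) from rfl]
  group

variable (j : (bbHom (G.induce (V₁ ∪ K))).ker →* BBP G K V₁ V₂)

/-- The extension of a compatible hom on the BB group to a hom on the RAAG into the
semidirect product; stated for an arbitrary induced subgraph containing `k₀`. -/
def lam {S : Set V} (hk : k₀ ∈ S) (j : (bbHom (G.induce S)).ker →* BBP G K V₁ V₂)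
    (hj : ∀ x, j (conjA G hk x) = beta G K V₁ V₂ hk₀ (j x)) :
    RAAG (G.induce S) →* SDP G K V₁ V₂ hk₀ where
  toFun g := ⟨j (pdiv G hk g), bbHom (G.induce S) g⟩
  map_one' := by
    have h1 : pdiv G hk (1 : RAAG (G.induce S)) = 1 := Subtype.ext (by
      show (1 : RAAG (G.induce S)) * _ = 1
      simp)
    show (⟨j (pdiv G hk 1), bbHom (G.induce S) 1⟩ : SDP G K V₁ V₂ hk₀) = 1
    rw [h1, map_one, map_one]
    rfl
  map_mul' g g' := by
    show (⟨j (pdiv G hk (g * g')), bbHom (G.induce S) (g * g')⟩ : SDP G K V₁ V₂ hk₀) =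
      (⟨j (pdiv G hk g), bbHom (G.induce S) g⟩ : SDP G K V₁ V₂ hk₀) *
        ⟨j (pdiv G hk g'), bbHom (G.induce S) g'⟩
    rw [SemidirectProduct.mul_def]
    have hz := zpow_conj_comm j (conjA G hk) (beta G K V₁ V₂ hk₀) hj
      (bbHom (G.induce S) g).toAdd (pdiv G hk g')
    congr 1
    · rw [pdiv_mul, map_mul, hz]
      rfl
    · rw [map_mul]

lemma lam_of {S : Set V} (hk : k₀ ∈ S) (j : (bbHom (G.induce S)).ker →* BBP G K V₁ V₂)
    (hj : ∀ x, j (conjA G hk x) = beta G K V₁ V₂ hk₀ (j x)) (x : S) :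
    lam G K V₁ V₂ hk₀ hk j hj (PresentedGroup.of x) =
      ⟨j (hgen G hk x.2), ofAdd 1⟩ := by
  have h1 : pdiv G hk (PresentedGroup.of x) = hgen G hk x.2 := Subtype.ext (by
    show (PresentedGroup.of x : RAAG (G.induce S)) * _ = _
    rw [bbHom_of]
    show _ * _ ^ (-(1 : ℤ)) = (PresentedGroup.of ⟨x.1, x.2⟩ : RAAG (G.induce S)) * _⁻¹
    rw [zpow_neg_one])
  show (⟨j (pdiv G hk (PresentedGroup.of x)), bbHom (G.induce S) (PresentedGroup.of x)⟩ :
    SDP G K V₁ V₂ hk₀) = _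
  rw [h1, bbHom_of]

lemma lam_ker {S : Set V} (hk : k₀ ∈ S) (j : (bbHom (G.induce S)).ker →* BBP G K V₁ V₂)
    (hj : ∀ x, j (conjA G hk x) = beta G K V₁ V₂ hk₀ (j x)) (x : (bbHom (G.induce S)).ker) :
    lam G K V₁ V₂ hk₀ hk j hj x.1 = ⟨j x, 1⟩ := by
  have hx : bbHom (G.induce S) x.1 = 1 := x.2
  have h1 : pdiv G hk x.1 = x := Subtype.ext (by
    show x.1 * _ = x.1
    rw [hx]
    simp)
  show (⟨j (pdiv G hk x.1), bbHom (G.induce S) x.1⟩ : SDP G K V₁ V₂ hk₀) = _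
  rw [h1, hx]

end BBAux
namespace BBAux

open Monoid Multiplicative

variable {V : Type*} (G : SimpleGraph V) (K V₁ V₂ : Set V) {k₀ : V} (hk₀ : k₀ ∈ K)

lemma hjT (x : (bbHom (G.induce (V₁ ∪ K))).ker) :
    ofT G K V₁ V₂ (conjA G (Set.mem_union_right V₁ hk₀) x) =
      beta G K V₁ V₂ hk₀ (ofT G K V₁ V₂ x) := by
  rw [beta_apply, betaF_ofT]

lemma hjF (x : (bbHom (G.induce (V₂ ∪ K))).ker) :
    ofF G K V₁ V₂ (conjA G (Set.mem_union_right V₂ hk₀) x) =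
      beta G K V₁ V₂ hk₀ (ofF G K V₁ V₂ x) := by
  rw [beta_apply, betaF_ofF]

lemma ThetaG_inclT (hcover : V₁ ∪ V₂ = Kᶜ) (hdisj : Disjoint V₁ V₂)
    (hnoedge : ∀ a ∈ V₁, ∀ b ∈ V₂, ¬ G.Adj a b) :
    (ThetaG G K V₁ V₂ hk₀ hcover hdisj hnoedge).comp (inclHomF G (V₁ ∪ K)) =
      lam G K V₁ V₂ hk₀ (Set.mem_union_right V₁ hk₀) (ofT G K V₁ V₂)
        (hjT G K V₁ V₂ hk₀) :=
  PresentedGroup.ext fun x => by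
    rw [MonoidHom.comp_apply, inclHomF_of,
      lam_of G K V₁ V₂ hk₀ (Set.mem_union_right V₁ hk₀) (ofT G K V₁ V₂) (hjT G K V₁ V₂ hk₀) x]
    simp only [ThetaG, PresentedGroup.toGroup.of]
    rw [theta_mem1 G K V₁ V₂ hk₀ hcover x.2]

lemma ThetaG_inclF (hcover : V₁ ∪ V₂ = Kᶜ) (hdisj : Disjoint V₁ V₂)
    (hnoedge : ∀ a ∈ V₁, ∀ b ∈ V₂, ¬ G.Adj a b) :
    (ThetaG G K V₁ V₂ hk₀ hcover hdisj hnoedge).comp (inclHomF G (V₂ ∪ K)) =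
      lam G K V₁ V₂ hk₀ (Set.mem_union_right V₂ hk₀) (ofF G K V₁ V₂)
        (hjF G K V₁ V₂ hk₀) :=
  PresentedGroup.ext fun x => by
    rw [MonoidHom.comp_apply, inclHomF_of,
      lam_of G K V₁ V₂ hk₀ (Set.mem_union_right V₂ hk₀) (ofF G K V₁ V₂) (hjF G K V₁ V₂ hk₀) x]
    simp only [ThetaG, PresentedGroup.toGroup.of]
    rw [theta_mem2 G K V₁ V₂ hk₀ hcover hdisj x.2]

lemma psi_phi (hcover : V₁ ∪ V₂ = Kᶜ) (hdisj : Disjoint V₁ V₂)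
    (hnoedge : ∀ a ∈ V₁, ∀ b ∈ V₂, ¬ G.Adj a b) :
    (psi G K V₁ V₂ hk₀ hcover hdisj hnoedge).comp (phi G K V₁ V₂) =
      MonoidHom.id (BBP G K V₁ V₂) := by
  apply PushoutI.hom_ext_nonempty
  rintro (_ | _) <;> refine MonoidHom.ext fun x => ?_
  · show psi G K V₁ V₂ hk₀ hcover hdisj hnoedge (phi G K V₁ V₂ (ofF G K V₁ V₂ x)) =
      ofF G K V₁ V₂ x
    change (bbHom (G.induce (V₂ ∪ K))).ker at x
    rw [phi_ofF]
    show (ThetaG G K V₁ V₂ hk₀ hcover hdisj hnoedge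
      (inclHomF G (V₂ ∪ K) x.1)).left = ofF G K V₁ V₂ x
    have h := DFunLike.congr_fun (ThetaG_inclF G K V₁ V₂ hk₀ hcover hdisj hnoedge) x.1
    rw [MonoidHom.comp_apply] at h
    rw [h, lam_ker]
  · show psi G K V₁ V₂ hk₀ hcover hdisj hnoedge (phi G K V₁ V₂ (ofT G K V₁ V₂ x)) =
      ofT G K V₁ V₂ x
    change (bbHom (G.induce (V₁ ∪ K))).ker at x
    rw [phi_ofT]
    show (ThetaG G K V₁ V₂ hk₀ hcover hdisj hnoedge
      (inclHomF G (V₁ ∪ K) x.1)).left = ofT G K V₁ V₂ x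
    have h := DFunLike.congr_fun (ThetaG_inclT G K V₁ V₂ hk₀ hcover hdisj hnoedge) x.1
    rw [MonoidHom.comp_apply] at h
    rw [h, lam_ker]

/-- The main isomorphism. -/
noncomputable def theIso (hcover : V₁ ∪ V₂ = Kᶜ) (hdisj : Disjoint V₁ V₂)
    (hnoedge : ∀ a ∈ V₁, ∀ b ∈ V₂, ¬ G.Adj a b) :
    (bbHom G).ker ≃* BBP G K V₁ V₂ :=
  MonoidHom.toMulEquiv (psi G K V₁ V₂ hk₀ hcover hdisj hnoedge) (phi G K V₁ V₂)
    (MonoidHom.ext fun x => phi_psi G K V₁ V₂ hk₀ hcover hdisj hnoedge x)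
    (psi_phi G K V₁ V₂ hk₀ hcover hdisj hnoedge)

end BBAux

/-- If a finite connected simplicial graph `Γ` has a separating clique `K`, with
`Γ ∖ K = V₁ ⊔ V₂` nonempty and no edges between `V₁` and `V₂`, then the
Bestvina–Brady group `H_Γ` is the amalgamated product `H_{Γ₁} ∗_{H_K} H_{Γ₂}`,
i.e. the pushout of the diagram `H_{Γ₁} ← H_K → H_{Γ₂}` of the restrictions to
kernels of the homomorphisms induced by the inclusions of induced subgraphs, where
`Γᵢ` is induced on `Vᵢ ∪ K`. -/
theorem bb_separating_clique_amalgam {V : Type*} [Fintype V] (G : SimpleGraph V)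
    (hconn : G.Connected) (K V₁ V₂ : Set V) (hKne : K.Nonempty) (hK : G.IsClique K)
    (h1 : V₁.Nonempty) (h2 : V₂.Nonempty) (hdisj : Disjoint V₁ V₂)
    (hcover : V₁ ∪ V₂ = Kᶜ)
    (hnoedge : ∀ a ∈ V₁, ∀ b ∈ V₂, ¬ G.Adj a b) :
    Nonempty ((bbHom G).ker ≃* Monoid.PushoutI (boolHoms
      (bbInclHom G (Set.subset_union_right : K ⊆ V₁ ∪ K))
      (bbInclHom G (Set.subset_union_right : K ⊆ V₂ ∪ K)))) := by
  obtain ⟨k₀, hk₀⟩ := hKne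
  exact ⟨BBAux.theIso G K V₁ V₂ hk₀ hcover hdisj hnoedge⟩
end

section
/- Let Γ be a simplicial graph, let e = (u,v) and e' = (u',v') be edges of Γ such that u' and v' both lie in star(e). If the vertex set star(e) induces a clique in Γ and the vertex set star(e') induces a clique in Γ, then star(e) = star(e'). -/
/-- The link of an edge `(u,v)`: the set of vertices adjacent to both `u` and `v`. -/
def edgeLink {V : Type*} (G : SimpleGraph V) (u v : V) : Set V :=
  {w | G.Adj u w ∧ G.Adj v w}

/-- The star of an edge `(u,v)`: its link together with the endpoints `u` and `v`. -/
def edgeStar {V : Type*} (G : SimpleGraph V) (u v : V) : Set V :=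
  edgeLink G u v ∪ {u, v}

lemma self_mem_edgeStar_left {V : Type*} (G : SimpleGraph V) (u v : V) :
    u ∈ edgeStar G u v := Or.inr (Or.inl rfl)

lemma self_mem_edgeStar_right {V : Type*} (G : SimpleGraph V) (u v : V) :
    v ∈ edgeStar G u v := Or.inr (Or.inr rfl)

lemma edgeStar_subset_aux {V : Type*} (G : SimpleGraph V) (u v u' v' : V)
    (hu' : u' ∈ edgeStar G u v) (hv' : v' ∈ edgeStar G u v)
    (hclique : G.IsClique (edgeStar G u v)) :
    edgeStar G u v ⊆ edgeStar G u' v' := by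
  intro w hw
  by_cases hwu : w = u'
  · exact Or.inr (Or.inl hwu)
  by_cases hwv : w = v'
  · exact Or.inr (Or.inr hwv)
  · exact Or.inl ⟨(hclique hu' hw (Ne.symm hwu)), (hclique hv' hw (Ne.symm hwv))⟩

/-- If `e = (u,v)` and `e' = (u',v')` are edges with both endpoints of `e'` in
`star(e)`, and both `star(e)` and `star(e')` induce cliques, then
`star(e) = star(e')`. -/
theorem edgeStar_eq_of_isClique {V : Type*} (G : SimpleGraph V) (u v u' v' : V)
    (he : G.Adj u v) (he' : G.Adj u' v')
    (hu' : u' ∈ edgeStar G u v) (hv' : v' ∈ edgeStar G u v)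
    (hclique : G.IsClique (edgeStar G u v)) (hclique' : G.IsClique (edgeStar G u' v')) :
    edgeStar G u v = edgeStar G u' v' := by
  have h1 := edgeStar_subset_aux G u v u' v' hu' hv' hclique
  have h2 := edgeStar_subset_aux G u' v' u v
    (h1 (self_mem_edgeStar_left G u v)) (h1 (self_mem_edgeStar_right G u v)) hclique'
  exact le_antisymm h1 h2
end

section
/- Let Γ be a finite simplicial graph with no induced cycles of length greater than or equal to 4. Let u and v be adjacent vertices of Γ, and let (u, x₁, …, x_k, v) with k ≥ 1 be a path in Γ whose internal vertices x₁, …, x_k are all distinct from u and v. Then some internal vertex x_i is adjacent to both u and v. -/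
/-- A simple graph has no induced cycles of length `≥ 4` if there is no embedding of
the cycle graph on `n ≥ 4` vertices onto an induced subgraph (i.e. no family of `n`
distinct vertices whose only adjacencies are the consecutive ones along the cycle). -/
def NoLongInducedCycles {V : Type*} (G : SimpleGraph V) : Prop :=
  ¬ ∃ (n : ℕ) (_ : 4 ≤ n) (f : Fin n ↪ V),
      ∀ i j : Fin n, G.Adj (f i) (f j) ↔ (SimpleGraph.cycleGraph n).Adj i j

private lemma sub_val_eq_one_iff {n : ℕ} (hn : 2 ≤ n) (a b : Fin n) :
    (a - b).val = 1 ↔ (a.val = b.val + 1 ∨ (a.val = 0 ∧ b.val + 1 = n)) := by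
  rw [Fin.sub_def]
  show ((n - b.val) + a.val) % n = 1 ↔ _
  have hb := b.isLt
  have ha := a.isLt
  rcases Nat.lt_or_ge ((n - b.val) + a.val) n with h | h
  · rw [Nat.mod_eq_of_lt h]
    constructor
    · intro h'; omega
    · rintro (h' | ⟨h1, h2⟩) <;> omega
  · rw [Nat.mod_eq_sub_mod h,
      Nat.mod_eq_of_lt (show (n - b.val) + a.val - n < n by omega)]
    constructor
    · intro h'; omega
    · rintro (h' | ⟨h1, h2⟩) <;> omega

private lemma getVert_injective {V : Type*} {G : SimpleGraph V} :
    ∀ {u v : V} (p : G.Walk u v), p.IsPath →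
      ∀ i j, i ≤ p.length → j ≤ p.length → p.getVert i = p.getVert j → i = j := by
  intro u v p
  induction p with
  | nil => intro _ i j hi hj _; simp [SimpleGraph.Walk.length_nil] at hi hj; omega
  | cons h q IH =>
    intro hp i j hi hj heq
    rw [SimpleGraph.Walk.cons_isPath_iff] at hp
    cases i with
    | zero =>
      cases j with
      | zero => rfl
      | succ j =>
        exfalso
        apply hp.2
        rw [SimpleGraph.Walk.mem_support_iff_exists_getVert]
        refine ⟨j, ?_, ?_⟩
        · simpa [SimpleGraph.Walk.getVert_zero, SimpleGraph.Walk.getVert_cons_succ]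
            using heq.symm
        · simp [SimpleGraph.Walk.length_cons] at hj; omega
    | succ i =>
      cases j with
      | zero =>
        exfalso
        apply hp.2
        rw [SimpleGraph.Walk.mem_support_iff_exists_getVert]
        refine ⟨i, ?_, ?_⟩
        · simpa [SimpleGraph.Walk.getVert_zero, SimpleGraph.Walk.getVert_cons_succ]
            using heq
        · simp [SimpleGraph.Walk.length_cons] at hi; omega
      | succ j =>
        have : i = j := by
          apply IH hp.1 i j
          · simp [SimpleGraph.Walk.length_cons] at hi; omega
          · simp [SimpleGraph.Walk.length_cons] at hj; omega
          · simpa [SimpleGraph.Walk.getVert_cons_succ] using heq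
        omega

private lemma cycle_aux {V : Type*} (G : SimpleGraph V) (hG : NoLongInducedCycles G) :
    ∀ n, 3 ≤ n → ∀ c : ℕ → V,
      (∀ i j, i < n → j < n → c i = c j → i = j) →
      (∀ i, i + 1 < n → G.Adj (c i) (c (i + 1))) →
      G.Adj (c (n - 1)) (c 0) →
      ∃ i, 0 < i ∧ i < n - 1 ∧ G.Adj (c 0) (c i) ∧ G.Adj (c (n - 1)) (c i) := by
  intro n
  induction n using Nat.strong_induction_on with
  | _ n IH =>
  intro hn c hinj hadj hwrap
  by_cases h3 : n = 3
  · subst h3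
    exact ⟨1, one_pos, by norm_num, hadj 0 (by norm_num), (hadj 1 (by norm_num)).symm⟩
  have h4 : 4 ≤ n := by omega
  by_cases hchord : ∃ i j, i + 2 ≤ j ∧ j < n ∧ ¬(i = 0 ∧ j = n - 1) ∧ G.Adj (c i) (c j)
  · obtain ⟨i, j, hij, hjn, hnotend, hcadj⟩ := hchord
    have hne : i ≠ 0 ∨ j ≠ n - 1 := by
      by_contra hc
      push_neg at hc
      exact hnotend ⟨hc.1, hc.2⟩
    set d := j - i - 1 with hd
    have hd1 : 1 ≤ d := by omega
    set m := n - d with hm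
    have hm3 : 3 ≤ m := by rcases hne with h | h <;> omega
    have hmn : m < n := by omega
    set c' : ℕ → V := fun k => if k ≤ i then c k else c (k + d) with hc'
    have hinj' : ∀ k l, k < m → l < m → c' k = c' l → k = l := by
      intro k l hk hl he
      simp only [hc'] at he
      split at he <;> split at he <;>
        · have := hinj _ _ (by omega) (by omega) he; omega
    have hadj' : ∀ k, k + 1 < m → G.Adj (c' k) (c' (k + 1)) := by
      intro k hk
      simp only [hc']
      rcases lt_trichotomy k i with h | h | h
      · rw [if_pos (by omega), if_pos (by omega)]
        exact hadj k (by omega)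
      · subst h
        rw [if_pos (le_refl _), if_neg (by omega)]
        have he : k + 1 + d = j := by omega
        rw [he]; exact hcadj
      · rw [if_neg (by omega), if_neg (by omega)]
        have he : k + 1 + d = k + d + 1 := by omega
        rw [he]
        exact hadj (k + d) (by omega)
    have hwrap' : G.Adj (c' (m - 1)) (c' 0) := by
      simp only [hc']
      rw [if_neg (by omega), if_pos (Nat.zero_le _)]
      have he : m - 1 + d = n - 1 := by omega
      rw [he]; exact hwrap
    obtain ⟨i', h0, him, ha0, ham⟩ := IH m hmn hm3 c' hinj' hadj' hwrap'
    have e0 : c' 0 = c 0 := by simp [hc']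
    have e1 : c' (m - 1) = c (n - 1) := by
      simp only [hc']
      rw [if_neg (by omega)]
      congr 1
      omega
    have eI : c' i' = c (if i' ≤ i then i' else i' + d) := by
      by_cases h : i' ≤ i <;> simp [hc', h]
    rw [e0, eI] at ha0
    rw [e1, eI] at ham
    exact ⟨if i' ≤ i then i' else i' + d, by split <;> omega, by split <;> omega, ha0, ham⟩
  · exfalso
    push_neg at hchord
    apply hG
    refine ⟨n, h4, ⟨fun k => c k.val, fun a b hab => Fin.ext (hinj _ _ a.isLt b.isLt hab)⟩, ?_⟩
    intro a b
    have ha := a.isLt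
    have hb := b.isLt
    show G.Adj (c a.val) (c b.val) ↔ _
    rw [SimpleGraph.cycleGraph_adj', sub_val_eq_one_iff (by omega), sub_val_eq_one_iff (by omega)]
    constructor
    · intro hA
      by_contra hcon
      push_neg at hcon
      obtain ⟨⟨hc1, hc2⟩, hc3, hc4⟩ := hcon
      rcases lt_trichotomy a.val b.val with h | h | h
      · exact hchord a.val b.val (by omega) hb
          (fun hq hq2 => hc2 hq (by omega)) hA
      · rw [h] at hA; exact G.loopless.irrefl _ hA
      · exact hchord b.val a.val (by omega) ha
          (fun hq hq2 => hc4 hq (by omega)) hA.symm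
    · rintro ((h | ⟨h0, hn1⟩) | (h | ⟨h0, hn1⟩))
      · rw [h]; exact (hadj b.val (by omega)).symm
      · rw [h0]
        have hb1 : b.val = n - 1 := by omega
        rw [hb1]; exact hwrap.symm
      · rw [h]; exact hadj a.val (by omega)
      · rw [h0]
        have ha1 : a.val = n - 1 := by omega
        rw [ha1]; exact hwrap

/-- In a finite simple graph with no induced cycles of length `≥ 4`, given adjacent
vertices `u, v` and a path from `u` to `v` with at least one internal vertex, some
internal vertex of the path is adjacent to both `u` and `v`. -/
theorem exists_internal_vertex_adj_both {V : Type*} [Fintype V] (G : SimpleGraph V)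
    (hG : NoLongInducedCycles G) (u v : V) (huv : G.Adj u v)
    (p : G.Walk u v) (hp : p.IsPath) (hlen : 2 ≤ p.length) :
    ∃ x ∈ p.support, x ≠ u ∧ x ≠ v ∧ G.Adj u x ∧ G.Adj v x := by
  obtain ⟨i, h0, hi, ha, hb⟩ := cycle_aux G hG (p.length + 1) (by omega) (fun k => p.getVert k)
    (fun i j hi hj he => getVert_injective p hp i j (by omega) (by omega) he)
    (fun i h => p.adj_getVert_succ (by omega))
    (by simp only [Nat.add_sub_cancel, p.getVert_length, p.getVert_zero]; exact huv.symm)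
  simp only [Nat.add_sub_cancel, p.getVert_length, p.getVert_zero] at ha hb hi
  refine ⟨p.getVert i, ?_, ?_, ?_, ha, hb⟩
  · rw [SimpleGraph.Walk.mem_support_iff_exists_getVert]
    exact ⟨i, rfl, by omega⟩
  · intro h
    have := getVert_injective p hp i 0 (by omega) (by omega)
      (by rw [h, p.getVert_zero])
    omega
  · intro h
    have := getVert_injective p hp i p.length (by omega) le_rfl
      (by rw [h, p.getVert_length])
    omega
end
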